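/- arXiv:2306.14107 — 5 statements merged into one kernel-verified Lean document; each statement's English description precedes it below -/
import Mathlib

section
/- For every natural number n, if P is a real polynomial of degree at most 2n+1 such that ⟨P,Q⟩₄ = 0 for every real polynomial Q of degree at most 2n+1, then P = 0 (i.e., the skew-symmetric form ⟨·,·⟩₄ is non-degenerate on the space of real polynomials of degree ≤ 2n+1). -/
/-!
If `deg P ≤ 2n`, then `⟨P, XP⟩₄ = ½ ∫ P² e^{-2V}`, which vanishes only for `P = 0`. If
`deg P = 2n + 1` is odd, `P` has a real root `r`, and for `P = (X - r) S` we get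
`⟨P, S⟩₄ = -½ ∫ S² e^{-2V}`, so `S = 0`. All these integrals converge since `V` has even degree
`≥ 2` and positive leading coefficient, so `e^{-2V}` decays faster than any exponential at `±∞`.
-/

open Polynomial MeasureTheory

/-- The skew-symmetric bilinear form `⟨P,Q⟩₄ = (1/2) ∫_ℝ (P Q' − P' Q) e^{−2V}`. -/
noncomputable def skew4 (V P Q : Polynomial ℝ) : ℝ :=
  (1 / 2) * ∫ x : ℝ,
    (P.eval x * (derivative Q).eval x - (derivative P).eval x * Q.eval x) *
      Real.exp (-2 * V.eval x)

open Filter Asymptotics Real Topology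

theorem skew4_swap (V P Q : ℝ[X]) : skew4 V Q P = -skew4 V P Q := by
  rw [skew4, skew4, ← mul_neg, ← integral_neg]
  congr 2 with x
  ring

theorem skew4_X_sub_C_mul_self (V S : ℝ[X]) (r : ℝ) :
    skew4 V S ((X - C r) * S) = 1 / 2 * ∫ x, S.eval x ^ 2 * exp (-2 * V.eval x) := by
  rw [skew4]
  congr 2 with x
  simp only [derivative_mul, derivative_sub, derivative_X, derivative_C, eval_mul, eval_add,
    eval_sub, eval_X, eval_C, eval_one, eval_zero]
  ring

namespace Polynomial

theorem exists_isRoot_of_odd_natDegree_of_leadingCoeff_pos {P : ℝ[X]} (hodd : Odd P.natDegree)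
    (hl : 0 < P.leadingCoeff) : ∃ x, P.IsRoot x := by
  have hdeg : 0 < P.degree := natDegree_pos_iff_degree_pos.mp hodd.pos
  have htop : Tendsto P.eval atTop atTop := P.tendsto_atTop_of_leadingCoeff_nonneg hdeg hl.le
  have hbot : Tendsto P.eval atBot atBot := by
    have hneg : Tendsto (P.comp (-X)).eval atTop atBot :=
      (P.comp (-X)).tendsto_atBot_of_leadingCoeff_nonpos (by simpa using hdeg)
        (by simp [hodd.neg_one_pow, hl.le])
    simpa [Function.comp_def] using hneg.comp tendsto_neg_atBot_atTop
  exact P.continuous.surjective htop hbot 0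

theorem exists_isRoot_of_odd_natDegree {P : ℝ[X]} (hodd : Odd P.natDegree) : ∃ x, P.IsRoot x := by
  have hP : P ≠ 0 := by rintro rfl; simp at hodd
  rcases (leadingCoeff_ne_zero.mpr hP).lt_or_gt with hl | hl
  · obtain ⟨x, hx⟩ := exists_isRoot_of_odd_natDegree_of_leadingCoeff_pos (P := -P)
      (by rwa [natDegree_neg]) (by simpa using hl)
    exact ⟨x, by simpa using hx⟩
  · exact exists_isRoot_of_odd_natDegree_of_leadingCoeff_pos hodd hl

theorem tendsto_eval_sub_mul_atTop {V : ℝ[X]} (hd : 2 ≤ V.natDegree) (hl : 0 < V.leadingCoeff)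
    (a : ℝ) : Tendsto (fun x => V.eval x - a * x) atTop atTop := by
  have hdeg : 1 < V.degree := by
    rw [degree_eq_natDegree (by rintro rfl; simp at hd)]
    exact_mod_cast hd
  have hlt : (C a * X).degree < V.degree := (degree_C_mul_X_le a).trans_lt hdeg
  have := (V - C a * X).tendsto_atTop_of_leadingCoeff_nonneg
    (by rw [degree_sub_eq_left_of_degree_lt hlt]; exact zero_lt_one.trans hdeg)
    (by rw [leadingCoeff_sub_of_degree_lt hlt]; exact hl.le)
  simpa using this

end Polynomial

section

variable {V : ℝ[X]}

theorem isBigO_mul_exp_atTop (hd : 2 ≤ V.natDegree) (hl : 0 < V.leadingCoeff) (R : ℝ[X]) :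
    (fun x => R.eval x * exp (-2 * V.eval x)) =O[atTop] fun x => exp (-x) := by
  have hlim : Tendsto (fun x => R.eval x / exp x * exp (-2 * (V.eval x - 1 * x))) atTop (𝓝 0) := by
    simpa using R.tendsto_div_exp_atTop.mul
      (tendsto_exp_atBot.comp ((tendsto_eval_sub_mul_atTop hd hl 1).const_mul_atTop_of_neg
        (by norm_num : (-2 : ℝ) < 0)))
  refine ((hlim.isBigO_one ℝ).mul (isBigO_refl (fun x => exp (-x)) atTop)).congr (fun x => ?_)
    fun x => one_mul _
  rw [div_eq_mul_inv, ← exp_neg, mul_assoc, mul_assoc, ← exp_add, ← exp_add]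
  ring_nf

theorem isBigO_mul_exp_atBot (hd : 2 ≤ V.natDegree) (he : Even V.natDegree)
    (hl : 0 < V.leadingCoeff) (R : ℝ[X]) :
    (fun x => R.eval x * exp (-2 * V.eval x)) =O[atBot] fun x => exp x := by
  have h := (isBigO_mul_exp_atTop (V := V.comp (-X)) (by simpa [natDegree_comp] using hd)
    (by simpa [he.neg_one_pow] using hl) (R.comp (-X))).comp_tendsto tendsto_neg_atBot_atTop
  simpa [Function.comp_def] using h

theorem integrable_mul_exp (hd : 2 ≤ V.natDegree) (he : Even V.natDegree)
    (hl : 0 < V.leadingCoeff) (R : ℝ[X]) :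
    Integrable fun x => R.eval x * exp (-2 * V.eval x) :=
  (by fun_prop : Continuous fun x => R.eval x * exp (-2 * V.eval x)).locallyIntegrable
    |>.integrable_of_isBigO_atBot_atTop
    (isBigO_mul_exp_atBot hd he hl R) ⟨Set.Iic 0, Iic_mem_atBot 0, integrableOn_exp_Iic 0⟩
    (isBigO_mul_exp_atTop hd hl R)
    ⟨Set.Ioi 0, Ioi_mem_atTop 0, by simpa using exp_neg_integrableOn_Ioi 0 one_pos⟩

theorem eq_zero_of_integral_sq_mul_exp_eq_zero (hd : 2 ≤ V.natDegree) (he : Even V.natDegree)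
    (hl : 0 < V.leadingCoeff) {S : ℝ[X]}
    (hS : ∫ x, S.eval x ^ 2 * exp (-2 * V.eval x) = 0) : S = 0 := by
  have hint : Integrable fun x => S.eval x ^ 2 * exp (-2 * V.eval x) := by
    convert integrable_mul_exp hd he hl (S ^ 2) using 3
    rw [eval_pow]
  have hzero : (fun x => S.eval x ^ 2 * exp (-2 * V.eval x)) = 0 :=
    ((by fun_prop : Continuous fun x => S.eval x ^ 2 * exp (-2 * V.eval x)).ae_eq_iff_eq volume
      continuous_const).mp ((integral_eq_zero_iff_of_nonneg (fun x => by positivity) hint).mp hS)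
  exact Polynomial.funext fun x => by simpa [exp_ne_zero] using congrFun hzero x

theorem eq_zero_of_skew4_X_sub_C_mul_self_eq_zero (hd : 2 ≤ V.natDegree)
    (he : Even V.natDegree) (hl : 0 < V.leadingCoeff) {S : ℝ[X]} (r : ℝ)
    (h : skew4 V S ((X - C r) * S) = 0) : S = 0 := by
  refine eq_zero_of_integral_sq_mul_exp_eq_zero hd he hl ?_
  rw [skew4_X_sub_C_mul_self] at h
  linarith

end

/-- Non-degeneracy of the skew form on polynomials of degree ≤ 2n+1. -/
theorem skew4_nondegenerate
    (D : ℕ) (hD : 2 ≤ D) (hDeven : Even D)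
    (V : Polynomial ℝ) (hVdeg : V.natDegree = D) (hVlead : 0 < V.leadingCoeff)
    (n : ℕ) (P : Polynomial ℝ) (hP : P.natDegree ≤ 2 * n + 1)
    (h : ∀ Q : Polynomial ℝ, Q.natDegree ≤ 2 * n + 1 → skew4 V P Q = 0) :
    P = 0 := by
  have hd : 2 ≤ V.natDegree := hVdeg ▸ hD
  have he : Even V.natDegree := hVdeg ▸ hDeven
  rcases hP.lt_or_eq with hlt | hodd
  · refine eq_zero_of_skew4_X_sub_C_mul_self_eq_zero hd he hVlead 0 (h _ ?_)
    exact (natDegree_mul_le.trans_eq (by rw [natDegree_X_sub_C])).trans (by omega)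
  · obtain ⟨r, hr⟩ := exists_isRoot_of_odd_natDegree (hodd ▸ odd_two_mul_add_one n)
    set S := P /ₘ (X - C r)
    have hPS : P = (X - C r) * S := (mul_divByMonic_eq_iff_isRoot.mpr hr).symm
    have hS := h S (by rw [natDegree_divByMonic P (monic_X_sub_C r)]; omega)
    rw [hPS, skew4_swap, neg_eq_zero] at hS
    rw [hPS, eq_zero_of_skew4_X_sub_C_mul_self_eq_zero hd he hVlead r hS, mul_zero]
end

section
/- For every skew-orthogonal sequence {P_n} with respect to ⟨·,·⟩₄, the skew-norms are all positive: h_n := ⟨P_{2n}, P_{2n+1}⟩₄ > 0 for every natural number n. -/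
open Polynomial MeasureTheory

/-- A sequence of monic real polynomials, `deg P_n = n`, which is skew-orthogonal with
respect to `⟨·,·⟩₄`. -/
def IsSkewOrthSeq (V : Polynomial ℝ) (P : ℕ → Polynomial ℝ) : Prop :=
  (∀ n, (P n).Monic ∧ (P n).natDegree = n) ∧
  (∀ n m, skew4 V (P (2 * n)) (P (2 * m)) = 0) ∧
  (∀ n m, skew4 V (P (2 * n + 1)) (P (2 * m + 1)) = 0) ∧
  (∀ n m, n ≠ m → skew4 V (P (2 * n)) (P (2 * m + 1)) = 0)

namespace SkewAux

open Filter Asymptotics Set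

/-- polynomial × decaying exponential tends to zero. -/
lemma key_tendsto (W S : Polynomial ℝ)
    (h : Tendsto (fun x => S.eval x - x) atTop atTop) :
    Tendsto (fun x => W.eval x * Real.exp (-S.eval x)) atTop (nhds 0) := by
  have hg : Tendsto (fun x => |W.eval x| * Real.exp (-x)) atTop (nhds 0) := by
    have h2 : Tendsto (fun x => |Polynomial.eval x W / Real.exp x|) atTop (nhds 0) := by
      simpa using (W.tendsto_div_exp_atTop).abs
    refine h2.congr fun x => ?_
    rw [abs_div, Real.abs_exp, Real.exp_neg, div_eq_mul_inv]
  refine squeeze_zero_norm' ?_ hg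
  filter_upwards [h.eventually_ge_atTop 0] with x hx
  have hle : Real.exp (-S.eval x) ≤ Real.exp (-x) := Real.exp_le_exp.mpr (by linarith)
  calc ‖W.eval x * Real.exp (-S.eval x)‖
      = |W.eval x| * Real.exp (-S.eval x) := by
        rw [norm_mul, Real.norm_eq_abs, Real.norm_eq_abs, Real.abs_exp]
    _ ≤ |W.eval x| * Real.exp (-x) := mul_le_mul_of_nonneg_left hle (abs_nonneg _)

lemma key_isBigO (W S : Polynomial ℝ)
    (h : Tendsto (fun x => S.eval x - 2 * x) atTop atTop) :
    (fun x => W.eval x * Real.exp (-S.eval x)) =O[atTop] (fun x => Real.exp (-x)) := by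
  have h0 : Tendsto (fun x => W.eval x * Real.exp (-S.eval x) * Real.exp x)
      atTop (nhds 0) := by
    have h' : Tendsto (fun x => (S - Polynomial.X).eval x - x) atTop atTop := by
      refine h.congr fun x => ?_
      simp [Polynomial.eval_sub]
      ring
    have := key_tendsto W (S - Polynomial.X) h'
    refine this.congr fun x => ?_
    have hx : -((S - Polynomial.X).eval x) = -S.eval x + x := by
      simp [Polynomial.eval_sub]; ring
    rw [hx, Real.exp_add, ← mul_assoc]
  rw [Asymptotics.isBigO_iff]
  refine ⟨1, ?_⟩
  have h0' : Tendsto (fun x => |W.eval x * Real.exp (-S.eval x) * Real.exp x|)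
      atTop (nhds 0) := by simpa using h0.abs
  have hb : ∀ᶠ x in atTop, |W.eval x * Real.exp (-S.eval x) * Real.exp x| ≤ 1 :=
    h0'.eventually_le_const one_pos
  filter_upwards [hb] with x hx
  rw [Real.norm_eq_abs, Real.norm_eq_abs, Real.abs_exp, one_mul]
  have hE : |W.eval x * Real.exp (-S.eval x)| * Real.exp x ≤ 1 := by
    calc |W.eval x * Real.exp (-S.eval x)| * Real.exp x
        = |W.eval x * Real.exp (-S.eval x) * Real.exp x| := by
          rw [abs_mul (W.eval x * Real.exp (-S.eval x)), Real.abs_exp]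
      _ ≤ 1 := hx
  calc |W.eval x * Real.exp (-S.eval x)|
      = |W.eval x * Real.exp (-S.eval x)| * Real.exp x * Real.exp (-x) := by
        rw [mul_assoc, ← Real.exp_add, add_neg_cancel, Real.exp_zero, mul_one]
    _ ≤ 1 * Real.exp (-x) := mul_le_mul_of_nonneg_right hE (Real.exp_pos _).le
    _ = Real.exp (-x) := one_mul _

lemma key_isBigO_bot (W S : Polynomial ℝ)
    (h : Tendsto (fun x => (S.comp (-Polynomial.X)).eval x - 2 * x) atTop atTop) :
    (fun x => W.eval x * Real.exp (-S.eval x)) =O[atBot] (fun x => Real.exp x) := by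
  have h1 := key_isBigO (W.comp (-Polynomial.X)) (S.comp (-Polynomial.X)) h
  have h2 := h1.comp_tendsto tendsto_neg_atBot_atTop
  refine h2.congr (fun x => ?_) (fun x => ?_)
  · simp [Function.comp, Polynomial.eval_comp]
  · simp [Function.comp]

lemma tendsto_aux (S : Polynomial ℝ) (hdeg : 2 ≤ S.natDegree) (hl : 0 < S.leadingCoeff) :
    Tendsto (fun x => S.eval x - 2 * x) atTop atTop := by
  have hS0 : S ≠ 0 := by
    intro h; rw [h] at hdeg; simp at hdeg
  have hdlt : (Polynomial.C (2:ℝ) * Polynomial.X).degree < S.degree := by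
    rw [Polynomial.degree_C_mul (by norm_num : (2:ℝ) ≠ 0), Polynomial.degree_X,
      Polynomial.degree_eq_natDegree hS0]
    exact_mod_cast lt_of_lt_of_le one_lt_two hdeg
  have hT : Tendsto (fun x => (S - Polynomial.C 2 * Polynomial.X).eval x) atTop atTop := by
    apply Polynomial.tendsto_atTop_of_leadingCoeff_nonneg
    · rw [Polynomial.degree_sub_eq_left_of_degree_lt hdlt, Polynomial.degree_eq_natDegree hS0]
      exact_mod_cast lt_of_lt_of_le two_pos hdeg
    · rw [Polynomial.leadingCoeff_sub_of_degree_lt hdlt]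
      exact hl.le
  refine hT.congr fun x => ?_
  simp [Polynomial.eval_sub]

lemma comp_neg_deg (S : Polynomial ℝ) : (S.comp (-Polynomial.X)).natDegree = S.natDegree := by
  rw [Polynomial.natDegree_comp]
  simp

lemma comp_neg_lead (S : Polynomial ℝ) (hev : Even S.natDegree) :
    (S.comp (-Polynomial.X)).leadingCoeff = S.leadingCoeff := by
  rw [Polynomial.leadingCoeff_comp (by simp : (-Polynomial.X : Polynomial ℝ).natDegree ≠ 0)]
  have : (-Polynomial.X : Polynomial ℝ).leadingCoeff = -1 := by
    simp [Polynomial.leadingCoeff_neg]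
  rw [this, hev.neg_one_pow, mul_one]

/-- Integrability of polynomial times the weight. -/
lemma integrable_weight (V : Polynomial ℝ)
    (hD : 2 ≤ V.natDegree) (hev : Even V.natDegree) (hl : 0 < V.leadingCoeff)
    (W : Polynomial ℝ) :
    Integrable (fun x => W.eval x * Real.exp (-2 * V.eval x)) := by
  set S : Polynomial ℝ := Polynomial.C 2 * V with hS
  have hSd : S.natDegree = V.natDegree := Polynomial.natDegree_C_mul (by norm_num)
  have hSl : 0 < S.leadingCoeff := by
    rw [hS, Polynomial.leadingCoeff_mul, Polynomial.leadingCoeff_C]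
    positivity
  have heq : (fun x => W.eval x * Real.exp (-2 * V.eval x))
      = fun x => W.eval x * Real.exp (-S.eval x) := by
    funext x
    rw [hS]
    simp [neg_mul]
  rw [heq]
  have hcont : Continuous fun x => W.eval x * Real.exp (-S.eval x) :=
    W.continuous.mul (Real.continuous_exp.comp S.continuous.neg)
  refine hcont.locallyIntegrable.integrable_of_isBigO_atBot_atTop
    (key_isBigO_bot W S ?_) ⟨Iic 0, Iic_mem_atBot 0, integrableOn_exp_Iic 0⟩
    (key_isBigO W S (tendsto_aux S (hSd ▸ hD) hSl))
    ⟨Ioi 0, Ioi_mem_atTop 0, by simpa using exp_neg_integrableOn_Ioi 0 one_pos⟩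
  refine tendsto_aux _ ?_ ?_
  · rw [comp_neg_deg, hSd]; exact hD
  · rw [comp_neg_lead S (by rw [hSd]; exact hev)]; exact hSl

/-- The integrand polynomial of `skew4`. -/
noncomputable def K (P Q : Polynomial ℝ) : Polynomial ℝ :=
  P * derivative Q - derivative P * Q

lemma skew4_eq (V P Q : Polynomial ℝ) :
    skew4 V P Q = (1 / 2) * ∫ x : ℝ, (K P Q).eval x * Real.exp (-2 * V.eval x) := by
  unfold skew4 K
  congr 1
  refine integral_congr_ae (Filter.Eventually.of_forall fun x => ?_)
  simp [Polynomial.eval_sub, Polynomial.eval_mul]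

variable {V : Polynomial ℝ} (hD : 2 ≤ V.natDegree) (hev : Even V.natDegree)
  (hl : 0 < V.leadingCoeff)

include hD hev hl

lemma skew4_add_right (P Q R : Polynomial ℝ) :
    skew4 V P (Q + R) = skew4 V P Q + skew4 V P R := by
  rw [skew4_eq, skew4_eq, skew4_eq, ← mul_add, ← integral_add
    (integrable_weight V hD hev hl (K P Q)) (integrable_weight V hD hev hl (K P R))]
  congr 1
  refine integral_congr_ae (Filter.Eventually.of_forall fun x => ?_)
  have : K P (Q + R) = K P Q + K P R := by
    unfold K
    rw [derivative_add]
    ring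
  simp [this, Polynomial.eval_add, add_mul]

lemma skew4_smul_right (P Q : Polynomial ℝ) (c : ℝ) :
    skew4 V P (c • Q) = c * skew4 V P Q := by
  rw [skew4_eq, skew4_eq]
  have : K P (c • Q) = c • K P Q := by
    unfold K
    rw [derivative_smul]
    simp [smul_sub, mul_smul_comm, smul_mul_assoc]
  rw [this]
  have : (∫ x : ℝ, (c • K P Q).eval x * Real.exp (-2 * V.eval x))
      = c * ∫ x : ℝ, (K P Q).eval x * Real.exp (-2 * V.eval x) := by
    rw [← integral_const_mul]
    refine integral_congr_ae (Filter.Eventually.of_forall fun x => ?_)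
    simp [mul_assoc]
  rw [this]
  ring

lemma skew4_sum_right (P : Polynomial ℝ) (s : Finset ℕ) (f : ℕ → Polynomial ℝ) :
    skew4 V P (∑ k ∈ s, f k) = ∑ k ∈ s, skew4 V P (f k) := by
  classical
  induction s using Finset.induction_on with
  | empty =>
      simp only [Finset.sum_empty]
      have : (0 : Polynomial ℝ) = (0:ℝ) • (0 : Polynomial ℝ) := by simp
      rw [this, skew4_smul_right hD hev hl, zero_mul]
  | insert _ _ hk ih =>
      rw [Finset.sum_insert hk, Finset.sum_insert hk, skew4_add_right hD hev hl, ih]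

include hD hev hl in
lemma skew4_X_mul_self_pos (Q : Polynomial ℝ) (hQ : Q ≠ 0) :
    0 < skew4 V Q (Polynomial.X * Q) := by
  have hK : K Q (Polynomial.X * Q) = Q * Q := by
    unfold K
    rw [derivative_mul, derivative_X]
    ring
  rw [skew4_eq, hK]
  have hint : Integrable (fun x => (Q * Q).eval x * Real.exp (-2 * V.eval x)) :=
    integrable_weight V hD hev hl (Q * Q)
  have hnn : 0 ≤ fun x => (Q * Q).eval x * Real.exp (-2 * V.eval x) := by
    intro x
    show (0:ℝ) ≤ (Q * Q).eval x * Real.exp (-2 * V.eval x)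
    simp only [Polynomial.eval_mul]
    exact mul_nonneg (mul_self_nonneg _) (Real.exp_pos _).le
  have hpos : 0 < ∫ x : ℝ, (Q * Q).eval x * Real.exp (-2 * V.eval x) := by
    rw [integral_pos_iff_support_of_nonneg hnn hint]
    rw [pos_iff_ne_zero]
    intro h0
    have hsub : (Set.univ : Set ℝ) ⊆
        Function.support (fun x => (Q * Q).eval x * Real.exp (-2 * V.eval x))
          ∪ {x : ℝ | Q.IsRoot x} := by
      intro x _
      by_cases hx : Q.eval x = 0
      · exact Or.inr hx
      · left
        simp only [Function.mem_support, Polynomial.eval_mul]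
        exact mul_ne_zero (mul_ne_zero hx hx) (Real.exp_ne_zero _)
    have hroots : volume {x : ℝ | Q.IsRoot x} = 0 :=
      (Polynomial.finite_setOf_isRoot hQ).measure_zero volume
    have hle : volume (Set.univ : Set ℝ) ≤
        volume (Function.support (fun x => (Q * Q).eval x * Real.exp (-2 * V.eval x)))
          + volume {x : ℝ | Q.IsRoot x} :=
      le_trans (measure_mono hsub) (measure_union_le _ _)
    rw [h0, hroots, add_zero, Real.volume_univ] at hle
    exact (lt_irrefl _ (lt_of_le_of_lt hle (by norm_num))).elim
  linarith

omit hD hev hl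

/-- Every polynomial of degree `< N` is a combination of the `P k`, `k < N`. -/
lemma exists_repr (P : ℕ → Polynomial ℝ)
    (hmono : ∀ n, (P n).Monic ∧ (P n).natDegree = n) :
    ∀ (N : ℕ) (Q : Polynomial ℝ), Q.degree < (N : ℕ) →
      ∃ c : ℕ → ℝ, Q = ∑ k ∈ Finset.range N, c k • P k := by
  intro N
  induction N with
  | zero =>
      intro Q hQ
      refine ⟨fun _ => 0, ?_⟩
      have : Q = 0 :=
        Polynomial.degree_eq_bot.mp (Nat.WithBot.lt_zero_iff.mp (by exact_mod_cast hQ))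
      simp [this]
  | succ N ih =>
      intro Q hQ
      set R := Q - Q.coeff N • P N with hR
      have hcoeffPN : (P N).coeff N = 1 := by
        have h1 := (hmono N).1.coeff_natDegree
        rwa [(hmono N).2] at h1
      have hRdeg : R.degree < (N : ℕ) := by
        rw [Polynomial.degree_lt_iff_coeff_zero]
        intro m hm
        rcases eq_or_lt_of_le hm with hm' | hm'
        · rw [hR]
          simp only [Polynomial.coeff_sub, Polynomial.coeff_smul, smul_eq_mul]
          rw [← hm', hcoeffPN, mul_one, sub_self]
        · have h1 : Q.coeff m = 0 := by
            apply Polynomial.coeff_eq_zero_of_degree_lt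
            exact lt_of_lt_of_le hQ (by exact_mod_cast hm')
          have h2 : (P N).coeff m = 0 := by
            apply Polynomial.coeff_eq_zero_of_natDegree_lt
            rw [(hmono N).2]; exact hm'
          rw [hR]
          simp [h1, h2]
      obtain ⟨c, hc⟩ := ih R hRdeg
      refine ⟨fun k => if k = N then Q.coeff N else c k, ?_⟩
      rw [Finset.sum_range_succ]
      have hsum : (∑ k ∈ Finset.range N,
          (if k = N then Q.coeff N else c k) • P k) = ∑ k ∈ Finset.range N, c k • P k := by
        refine Finset.sum_congr rfl fun k hk => ?_
        rw [if_neg (Nat.ne_of_lt (Finset.mem_range.mp hk))]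
      rw [hsum, ← hc, hR]
      simp

end SkewAux

/-- The skew norms `h_n = ⟨P_{2n}, P_{2n+1}⟩₄` are all positive. -/
theorem skew_norms_pos
    (D : ℕ) (hD : 2 ≤ D) (hDeven : Even D)
    (V : Polynomial ℝ) (hVdeg : V.natDegree = D) (hVlead : 0 < V.leadingCoeff)
    (P : ℕ → Polynomial ℝ) (hP : IsSkewOrthSeq V P) (n : ℕ) :
    0 < skew4 V (P (2 * n)) (P (2 * n + 1)) := by
  obtain ⟨hmono, horth1, horth2, horth3⟩ := hP
  have hD' : 2 ≤ V.natDegree := hVdeg ▸ hD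
  have hev : Even V.natDegree := hVdeg ▸ hDeven
  set A := P (2 * n) with hA
  set B := P (2 * n + 1) with hB
  have hAm : A.Monic := (hmono (2 * n)).1
  have hAd : A.natDegree = 2 * n := (hmono (2 * n)).2
  have hBm : B.Monic := (hmono (2 * n + 1)).1
  have hBd : B.natDegree = 2 * n + 1 := (hmono (2 * n + 1)).2
  -- X * A is monic of degree 2n+1
  have hXAm : (Polynomial.X * A).Monic := (monic_X).mul hAm
  have hXAd : (Polynomial.X * A).natDegree = 2 * n + 1 := by
    rw [Polynomial.natDegree_mul Polynomial.X_ne_zero hAm.ne_zero,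
      Polynomial.natDegree_X, hAd]
    ring
  -- the difference has degree < 2n+1
  have hdeg : (Polynomial.X * A - B).degree < ((2 * n + 1 : ℕ) : WithBot ℕ) := by
    have hdeq : (Polynomial.X * A).degree = B.degree := by
      rw [Polynomial.degree_eq_natDegree hXAm.ne_zero,
        Polynomial.degree_eq_natDegree hBm.ne_zero, hXAd, hBd]
    have hlc : (Polynomial.X * A).leadingCoeff = B.leadingCoeff := by
      rw [hXAm.leadingCoeff, hBm.leadingCoeff]
    have := Polynomial.degree_sub_lt hdeq hXAm.ne_zero hlc
    rwa [Polynomial.degree_eq_natDegree hXAm.ne_zero, hXAd] at this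
  obtain ⟨c, hc⟩ := SkewAux.exists_repr P hmono (2 * n + 1) (Polynomial.X * A - B) hdeg
  have hXA : Polynomial.X * A = B + ∑ k ∈ Finset.range (2 * n + 1), c k • P k := by
    rw [← hc]; ring
  have hzero : ∀ k ∈ Finset.range (2 * n + 1), skew4 V A (c k • P k) = 0 := by
    intro k hk
    rw [SkewAux.skew4_smul_right hD' hev hVlead]
    have hk' : k < 2 * n + 1 := Finset.mem_range.mp hk
    rcases Nat.even_or_odd k with ⟨m, hm⟩ | ⟨m, hm⟩
    · rw [hA, hm, show m + m = 2 * m by ring, horth1 n m, mul_zero]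
    · have hmn : n ≠ m := by omega
      rw [hA, hm, horth3 n m hmn, mul_zero]
  have hexp : skew4 V A (Polynomial.X * A)
      = skew4 V A B + ∑ k ∈ Finset.range (2 * n + 1), skew4 V A (c k • P k) := by
    rw [hXA, SkewAux.skew4_add_right hD' hev hVlead,
      SkewAux.skew4_sum_right hD' hev hVlead]
  rw [Finset.sum_eq_zero hzero, add_zero] at hexp
  rw [← hexp]
  exact SkewAux.skew4_X_mul_self_pos hD' hev hVlead A hAm.ne_zero
end

section
/- For any prescribed sequence of real numbers (c_n)_{n∈ℕ}, there exists exactly one skew-orthogonal sequence {P_n} with respect to ⟨·,·⟩₄ such that for every n the coefficient of x^{2n} in P_{2n+1} equals c_n. -/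
open Polynomial MeasureTheory Filter Set

lemma tendsto_poly_mul_exp_aux (V : Polynomial ℝ) (hd : 2 ≤ V.natDegree)
    (hl : 0 < V.leadingCoeff) (R : Polynomial ℝ) :
    Tendsto (fun x => R.eval x * Real.exp (x - 2 * V.eval x)) atTop (nhds 0) := by
  have hVne : V ≠ 0 := fun h => by simp [h] at hl
  set W : Polynomial ℝ := Polynomial.C 2 * V - Polynomial.C 2 * Polynomial.X with hW
  have hdegCV : (Polynomial.C (2:ℝ) * V).degree = V.degree := by
    rw [degree_C_mul (by norm_num)]
  have hdegV : 1 < V.degree := by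
    rw [degree_eq_natDegree hVne]
    exact_mod_cast lt_of_lt_of_le (by norm_num) hd
  have hdegW : W.degree = V.degree := by
    rw [hW, degree_sub_eq_left_of_degree_lt, hdegCV]
    rw [hdegCV, degree_C_mul (by norm_num : (2:ℝ) ≠ 0), degree_X]
    exact hdegV
  have hWne : W ≠ 0 := by
    intro h; rw [h, degree_zero] at hdegW
    exact absurd hdegW.symm (degree_eq_bot.not.mpr hVne ∘ id)
  have hleadW : W.leadingCoeff = 2 * V.leadingCoeff := by
    have hnd : W.natDegree = V.natDegree := natDegree_eq_of_degree_eq hdegW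
    rw [leadingCoeff, hnd, hW]
    simp only [coeff_sub, coeff_C_mul, coeff_X]
    rw [if_neg (by omega : ¬ 1 = V.natDegree)]
    rw [leadingCoeff]
    ring
  have hWtop : Tendsto (fun x => W.eval x) atTop atTop := by
    apply Polynomial.tendsto_atTop_of_leadingCoeff_nonneg
    · rw [hdegW]; exact lt_trans (by norm_num) hdegV
    · rw [hleadW]; positivity
  have h1 : Tendsto (fun x => Real.exp (-(W.eval x))) atTop (nhds 0) :=
    Real.tendsto_exp_atBot.comp (tendsto_neg_atBot_iff.mpr hWtop)
  have h2 := R.tendsto_div_exp_atTop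
  have := h2.mul h1
  rw [mul_zero] at this
  refine this.congr (fun x => ?_)
  rw [hW]
  simp only [eval_sub, eval_mul, eval_C, eval_X]
  rw [div_mul_eq_mul_div, div_eq_iff (Real.exp_ne_zero x), mul_assoc, ← Real.exp_add]
  ring_nf

lemma cont_poly_weight (V R : Polynomial ℝ) :
    Continuous (fun x => R.eval x * Real.exp (-2 * V.eval x)) :=
  (Polynomial.continuous R).mul
    (Real.continuous_exp.comp (continuous_const.mul (Polynomial.continuous V)))

lemma integrableOn_Ioi_poly_weight (V : Polynomial ℝ) (hd : 2 ≤ V.natDegree)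
    (hl : 0 < V.leadingCoeff) (R : Polynomial ℝ) :
    ∃ a : ℝ, IntegrableOn (fun x => R.eval x * Real.exp (-2 * V.eval x)) (Ioi a) := by
  have h := tendsto_poly_mul_exp_aux V hd hl R
  have hev : ∀ᶠ x in atTop, ‖R.eval x * Real.exp (x - 2 * V.eval x)‖ ≤ 1 :=
    h.norm.eventually_le_const (by norm_num)
  obtain ⟨a, ha⟩ := eventually_atTop.1 hev
  refine ⟨a, ?_⟩
  apply Integrable.mono' (exp_neg_integrableOn_Ioi a one_pos)
  · exact (Continuous.aestronglyMeasurable (cont_poly_weight V R)).restrict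
  · filter_upwards [ae_restrict_mem measurableSet_Ioi] with x hx
    have h1 := ha x (le_of_lt hx)
    rw [Real.norm_eq_abs, abs_mul, abs_of_pos (Real.exp_pos _)] at h1 ⊢
    have key : Real.exp (-2 * V.eval x) = Real.exp (x - 2 * V.eval x) * Real.exp (-1 * x) := by
      rw [← Real.exp_add]; ring_nf
    rw [key, ← mul_assoc]
    calc |R.eval x| * Real.exp (x - 2 * V.eval x) * Real.exp (-1 * x)
        ≤ 1 * Real.exp (-1 * x) := by
          apply mul_le_mul_of_nonneg_right h1 (Real.exp_pos _).le
      _ = Real.exp (-1 * x) := one_mul _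

lemma integrable_poly_weight (V : Polynomial ℝ) (hd : 2 ≤ V.natDegree)
    (hde : Even V.natDegree) (hl : 0 < V.leadingCoeff) (R : Polynomial ℝ) :
    Integrable (fun x => R.eval x * Real.exp (-2 * V.eval x)) := by
  obtain ⟨a, ha⟩ := integrableOn_Ioi_poly_weight V hd hl R
  -- reflected polynomial
  set V' := V.comp (-Polynomial.X) with hV'
  have hnd' : V'.natDegree = V.natDegree := by
    rw [hV', natDegree_comp]; simp
  have hl' : 0 < V'.leadingCoeff := by
    rw [hV', leadingCoeff_comp (by simp)]
    simp only [leadingCoeff_neg, leadingCoeff_X]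
    rw [hde.neg_one_pow]
    simpa using hl
  obtain ⟨b, hb⟩ := integrableOn_Ioi_poly_weight V' (hnd' ▸ hd) hl' (R.comp (-Polynomial.X))
  have hev' : ∀ x : ℝ, (R.comp (-Polynomial.X)).eval x * Real.exp (-2 * V'.eval x)
      = R.eval (-x) * Real.exp (-2 * V.eval (-x)) := by
    intro x; rw [hV', eval_comp, eval_comp]; simp
  have hIio : IntegrableOn (fun x => R.eval x * Real.exp (-2 * V.eval x)) (Iio (-b)) := by
    rw [← (Measure.measurePreserving_neg (volume : Measure ℝ)).integrableOn_comp_preimage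
        (Homeomorph.neg ℝ).measurableEmbedding]
    simp only [Function.comp_def, neg_preimage, neg_Iio, neg_neg]
    exact (hb.congr_fun (fun x _ => hev' x) measurableSet_Ioi)
  have hmid : IntegrableOn (fun x => R.eval x * Real.exp (-2 * V.eval x)) (Icc (-b) a) :=
    Continuous.integrableOn_Icc (cont_poly_weight V R)
  have : IntegrableOn (fun x => R.eval x * Real.exp (-2 * V.eval x)) (Iio (-b) ∪ (Icc (-b) a ∪ Ioi a)) :=
    hIio.union (hmid.union ha)
  rw [← integrableOn_univ]
  apply this.mono_set
  intro x _
  simp only [mem_union, mem_Iio, mem_Icc, mem_Ioi]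
  rcases lt_or_ge x (-b) with h | h
  · exact Or.inl h
  · rcases le_or_gt x a with h2 | h2
    · exact Or.inr (Or.inl ⟨h, h2⟩)
    · exact Or.inr (Or.inr h2)


variable {V : Polynomial ℝ}

lemma integrable_skew_integrand (hd : 2 ≤ V.natDegree) (hde : Even V.natDegree)
    (hl : 0 < V.leadingCoeff) (P Q : Polynomial ℝ) :
    Integrable (fun x => (P.eval x * (derivative Q).eval x - (derivative P).eval x * Q.eval x) *
      Real.exp (-2 * V.eval x)) := by
  have := integrable_poly_weight V hd hde hl (P * derivative Q - derivative P * Q)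
  simpa using this

lemma skew4_antisymm (P Q : Polynomial ℝ) : skew4 V P Q = - skew4 V Q P := by
  rw [skew4, skew4, ← mul_neg, ← integral_neg]
  congr 1
  apply congrArg
  funext x
  ring

lemma skew4_self (P : Polynomial ℝ) : skew4 V P P = 0 := by
  have : skew4 V P P = - skew4 V P P := skew4_antisymm P P
  linarith

lemma skew4_add_right (hd : 2 ≤ V.natDegree) (hde : Even V.natDegree)
    (hl : 0 < V.leadingCoeff) (P Q R : Polynomial ℝ) :
    skew4 V P (Q + R) = skew4 V P Q + skew4 V P R := by
  rw [skew4, skew4, skew4, ← mul_add,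
    ← integral_add (integrable_skew_integrand hd hde hl P Q)
      (integrable_skew_integrand hd hde hl P R)]
  congr 1
  apply congrArg
  funext x
  simp only [derivative_add, eval_add]
  ring

lemma skew4_smul_right (a : ℝ) (P Q : Polynomial ℝ) :
    skew4 V P (a • Q) = a * skew4 V P Q := by
  rw [skew4, skew4]
  rw [show (fun x => (P.eval x * (derivative (a • Q)).eval x
        - (derivative P).eval x * (a • Q).eval x) * Real.exp (-2 * V.eval x))
      = fun x => a * ((P.eval x * (derivative Q).eval x
        - (derivative P).eval x * Q.eval x) * Real.exp (-2 * V.eval x)) from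
    funext fun x => by
      simp only [derivative_smul, eval_smul, smul_eq_mul]
      ring]
  rw [integral_const_mul]
  ring

lemma skew4_add_left (hd : 2 ≤ V.natDegree) (hde : Even V.natDegree)
    (hl : 0 < V.leadingCoeff) (P Q R : Polynomial ℝ) :
    skew4 V (P + Q) R = skew4 V P R + skew4 V Q R := by
  rw [skew4_antisymm, skew4_add_right hd hde hl, skew4_antisymm R P, skew4_antisymm R Q]
  ring

lemma skew4_smul_left (a : ℝ) (P Q : Polynomial ℝ) :
    skew4 V (a • P) Q = a * skew4 V P Q := by
  rw [skew4_antisymm, skew4_smul_right, skew4_antisymm Q P]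
  ring

lemma skew4_mul_X_self (P : Polynomial ℝ) :
    skew4 V P (Polynomial.X * P)
      = (1/2) * ∫ x : ℝ, (P.eval x)^2 * Real.exp (-2 * V.eval x) := by
  rw [skew4]
  congr 1
  apply congrArg
  funext x
  simp only [derivative_mul, derivative_X, eval_add, eval_mul, eval_X, one_mul]
  ring

lemma skew4_mul_X_pos (hd : 2 ≤ V.natDegree) (hde : Even V.natDegree)
    (hl : 0 < V.leadingCoeff) {P : Polynomial ℝ} (hP : P ≠ 0) :
    0 < skew4 V P (Polynomial.X * P) := by
  rw [skew4_mul_X_self]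
  have hint : Integrable (fun x => (P.eval x)^2 * Real.exp (-2 * V.eval x)) := by
    have := integrable_poly_weight V hd hde hl (P ^ 2)
    simpa [sq] using this
  have hnn : 0 ≤ fun x => (P.eval x)^2 * Real.exp (-2 * V.eval x) := by
    intro x
    positivity
  have hiff := integral_pos_iff_support_of_nonneg hnn hint
  have hpos : 0 < volume (Function.support fun x => (P.eval x)^2 * Real.exp (-2 * V.eval x)) := by
    have hsupp : (Function.support fun x => (P.eval x)^2 * Real.exp (-2 * V.eval x))
        = {x : ℝ | P.IsRoot x}ᶜ := by
      ext x
      simp [Function.support, Polynomial.IsRoot, pow_eq_zero_iff, Real.exp_ne_zero,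
        sub_eq_zero]
    rw [hsupp, pos_iff_ne_zero]
    intro h0
    have huniv : volume (Set.univ : Set ℝ) ≤ 0 := by
      have hsub : (Set.univ : Set ℝ) ⊆ {x : ℝ | P.IsRoot x} ∪ {x : ℝ | P.IsRoot x}ᶜ := by
        simp
      calc volume (Set.univ : Set ℝ)
          ≤ volume ({x : ℝ | P.IsRoot x} ∪ {x : ℝ | P.IsRoot x}ᶜ) := measure_mono hsub
        _ ≤ volume {x : ℝ | P.IsRoot x} + volume {x : ℝ | P.IsRoot x}ᶜ := measure_union_le _ _
        _ ≤ 0 := by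
            rw [(Polynomial.finite_setOf_isRoot hP).measure_zero, h0, add_zero]
    rw [Real.volume_univ] at huniv
    exact (by simp at huniv)
  have := hiff.mpr hpos
  linarith

section algebra

variable {V : Polynomial ℝ} (hd : 2 ≤ V.natDegree) (hde : Even V.natDegree)
  (hl : 0 < V.leadingCoeff)

lemma skew4_zero_right (P : Polynomial ℝ) : skew4 V P 0 = 0 := by
  have h := skew4_smul_right (V := V) 0 P 0
  simpa using h

lemma skew4_zero_left (P : Polynomial ℝ) : skew4 V 0 P = 0 := by
  rw [skew4_antisymm, skew4_zero_right]
  ring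

lemma skew4_sub_left (hd : 2 ≤ V.natDegree) (hde : Even V.natDegree)
    (hl : 0 < V.leadingCoeff) (P Q R : Polynomial ℝ) :
    skew4 V (P - Q) R = skew4 V P R - skew4 V Q R := by
  have h1 : P - Q = P + (-1 : ℝ) • Q := by
    rw [neg_one_smul]; ring
  rw [h1, skew4_add_left hd hde hl, skew4_smul_left]
  ring

lemma skew4_sub_right (hd : 2 ≤ V.natDegree) (hde : Even V.natDegree)
    (hl : 0 < V.leadingCoeff) (P Q R : Polynomial ℝ) :
    skew4 V P (Q - R) = skew4 V P Q - skew4 V P R := by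
  rw [skew4_antisymm, skew4_sub_left hd hde hl, skew4_antisymm Q P, skew4_antisymm R P]
  ring

lemma mem_degreeLT_iff_coeff {m : ℕ} {Q : Polynomial ℝ} :
    Q ∈ degreeLT ℝ m ↔ ∀ k, m ≤ k → Q.coeff k = 0 := by
  rw [Polynomial.mem_degreeLT, Polynomial.degree_lt_iff_coeff_zero]

lemma monic_of_top_coeff {Q : Polynomial ℝ} {m : ℕ} (hQ : Q ∈ degreeLT ℝ (m + 1))
    (h1 : Q.coeff m = 1) : Q.Monic ∧ Q.natDegree = m := by
  have hne : Q ≠ 0 := fun h => by simp [h] at h1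
  have hle : Q.natDegree ≤ m := by
    rw [Polynomial.mem_degreeLT] at hQ
    have := (Polynomial.natDegree_lt_iff_degree_lt hne (n := m + 1)).mpr (by exact_mod_cast hQ)
    omega
  have hge : m ≤ Q.natDegree := Polynomial.le_natDegree_of_ne_zero (by rw [h1]; norm_num)
  have hdeg : Q.natDegree = m := le_antisymm hle hge
  exact ⟨by rwa [Polynomial.Monic, Polynomial.leadingCoeff, hdeg], hdeg⟩

/-- If `P` pairs to zero with monic `p k` for all `k < m`, it pairs to zero with all of
`degreeLT m`. -/
lemma skew_zero_of_degLT (hd : 2 ≤ V.natDegree) (hde : Even V.natDegree)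
    (hl : 0 < V.leadingCoeff) (p : ℕ → Polynomial ℝ) (P : Polynomial ℝ) :
    ∀ m : ℕ, (∀ k, k < m → (p k).Monic ∧ (p k).natDegree = k) →
    (∀ k, k < m → skew4 V P (p k) = 0) →
    ∀ Q ∈ degreeLT ℝ m, skew4 V P Q = 0 := by
  intro m
  induction m with
  | zero =>
    intro _ _ Q hQ
    have : Q = 0 := by
      rw [Polynomial.mem_degreeLT] at hQ
      norm_cast at hQ
      exact Polynomial.degree_eq_bot.mp (Nat.WithBot.lt_zero_iff.mp (by exact_mod_cast hQ))
    rw [this, skew4_zero_right]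
  | succ m ih =>
    intro hmon hpair Q hQ
    set a := Q.coeff m with ha
    have hpm := hmon m (by omega)
    have hR : Q - a • p m ∈ degreeLT ℝ m := by
      rw [mem_degreeLT_iff_coeff]
      intro k hk
      rw [Polynomial.coeff_sub, Polynomial.coeff_smul, smul_eq_mul]
      rcases eq_or_lt_of_le hk with h | h
      · have : (p m).coeff m = 1 := by
          have := hpm.1
          rwa [Polynomial.Monic, Polynomial.leadingCoeff, hpm.2] at this
        rw [← h, this, ← ha]
        ring
      · have h1 : Q.coeff k = 0 := mem_degreeLT_iff_coeff.mp hQ k (by omega)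
        have h2 : (p m).coeff k = 0 := Polynomial.coeff_eq_zero_of_natDegree_lt (by omega)
        rw [h1, h2]
        ring
    have hsplit : Q = (Q - a • p m) + a • p m := by ring
    rw [hsplit, skew4_add_right hd hde hl, skew4_smul_right,
      ih (fun k hk => hmon k (by omega)) (fun k hk => hpair k (by omega)) _ hR,
      hpair m (by omega)]
    ring

end algebra

/-- Partial skew-orthogonality conditions up to index `2 * N`. -/
def PartCond (V : Polynomial ℝ) (c : ℕ → ℝ) (N : ℕ) (p : ℕ → Polynomial ℝ) : Prop :=
  (∀ k, k < 2 * N → (p k).Monic ∧ (p k).natDegree = k) ∧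
  (∀ n m, 2 * n < 2 * N → 2 * m < 2 * N → skew4 V (p (2 * n)) (p (2 * m)) = 0) ∧
  (∀ n m, 2 * n + 1 < 2 * N → 2 * m + 1 < 2 * N →
    skew4 V (p (2 * n + 1)) (p (2 * m + 1)) = 0) ∧
  (∀ n m, n ≠ m → 2 * n < 2 * N → 2 * m + 1 < 2 * N →
    skew4 V (p (2 * n)) (p (2 * m + 1)) = 0) ∧
  (∀ m, 2 * m + 1 < 2 * N → (p (2 * m + 1)).coeff (2 * m) = c m) ∧
  (∀ k, 2 * N ≤ k → p k = 0)

section partcond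

variable {V : Polynomial ℝ} {c : ℕ → ℝ} {N : ℕ} {p : ℕ → Polynomial ℝ}

/-- Any two distinct non-partner elements pair to zero. -/
lemma PartCond.orth (h : PartCond V c N p) {k j : ℕ} (hk : k < 2 * N) (hj : j < 2 * N)
    (hne : k / 2 ≠ j / 2) : skew4 V (p k) (p j) = 0 := by
  obtain ⟨hmon, hee, hoo, heo, hco, hz⟩ := h
  rcases Nat.even_or_odd k with ⟨n, hn⟩ | ⟨n, hn⟩ <;>
    rcases Nat.even_or_odd j with ⟨m, hm⟩ | ⟨m, hm⟩
  · rw [show k = 2 * n from by omega, show j = 2 * m from by omega]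
    exact hee n m (by omega) (by omega)
  · rw [show k = 2 * n from by omega, show j = 2 * m + 1 from by omega]
    exact heo n m (by omega) (by omega) (by omega)
  · rw [show k = 2 * n + 1 from by omega, show j = 2 * m from by omega, skew4_antisymm,
      heo m n (by omega) (by omega) (by omega), neg_zero]
  · rw [show k = 2 * n + 1 from by omega, show j = 2 * m + 1 from by omega]
    exact hoo n m (by omega) (by omega)

/-- Each element pairs to zero with all strictly lower-index elements except its partner;
in particular with everything of index `< 2 * (k / 2)`. -/
lemma PartCond.orth_below (h : PartCond V c N p) {k j : ℕ} (hk : k < 2 * N)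
    (hj : j < 2 * (k / 2)) : skew4 V (p k) (p j) = 0 :=
  h.orth hk (by omega) (by omega)

lemma PartCond.pair_ne_zero (hd : 2 ≤ V.natDegree) (hde : Even V.natDegree)
    (hl : 0 < V.leadingCoeff) (h : PartCond V c N p) {m : ℕ} (hm : m < N) :
    skew4 V (p (2 * m)) (p (2 * m + 1)) ≠ 0 := by
  intro hs
  have hmon : ∀ k, k < 2 * m + 2 → (p k).Monic ∧ (p k).natDegree = k :=
    fun k hk => h.1 k (by omega)
  have horth : ∀ k, k < 2 * m + 2 → skew4 V (p (2 * m)) (p k) = 0 := by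
    intro k hk
    rcases Nat.lt_or_ge k (2 * m) with h1 | h1
    · exact h.orth_below (by omega) (by simpa using h1)
    · rcases Nat.eq_or_lt_of_le h1 with h2 | h2
      · rw [← h2, skew4_self]
      · have : k = 2 * m + 1 := by omega
        rw [this]; exact hs
  have hspan := skew_zero_of_degLT hd hde hl p (p (2 * m)) (2 * m + 2) hmon horth
  have hpm := h.1 (2 * m) (by omega)
  have hne : p (2 * m) ≠ 0 := hpm.1.ne_zero
  have hX : Polynomial.X * p (2 * m) ∈ degreeLT ℝ (2 * m + 2) := by
    rw [Polynomial.mem_degreeLT, Polynomial.degree_mul, Polynomial.degree_X,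
      Polynomial.degree_eq_natDegree hne, hpm.2]
    exact_mod_cast by omega
  have := skew4_mul_X_pos hd hde hl hne
  rw [hspan _ hX] at this
  exact lt_irrefl 0 this

/-- Triviality of the radical on `degreeLT (2 * n)` for `n ≤ N`. -/
lemma PartCond.radical_eq_zero (hd : 2 ≤ V.natDegree) (hde : Even V.natDegree)
    (hl : 0 < V.leadingCoeff) (h : PartCond V c N p) :
    ∀ n, n ≤ N → ∀ Q ∈ degreeLT ℝ (2 * n),
      (∀ j, j < 2 * n → skew4 V Q (p j) = 0) → Q = 0 := by
  intro n
  induction n with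
  | zero =>
    intro _ Q hQ _
    rw [Polynomial.mem_degreeLT] at hQ
    exact Polynomial.degree_eq_bot.mp (Nat.WithBot.lt_zero_iff.mp (by exact_mod_cast hQ))
  | succ n ih =>
    intro hn Q hQ hpair
    have hs := h.pair_ne_zero hd hde hl (m := n) (by omega)
    have hp2n := h.1 (2 * n) (by omega)
    have hp2n1 := h.1 (2 * n + 1) (by omega)
    have hc2n1 : (p (2 * n + 1)).coeff (2 * n + 1) = 1 := by
      have := hp2n1.1
      rwa [Polynomial.Monic, Polynomial.leadingCoeff, hp2n1.2] at this
    have hc2n : (p (2 * n)).coeff (2 * n) = 1 := by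
      have := hp2n.1
      rwa [Polynomial.Monic, Polynomial.leadingCoeff, hp2n.2] at this
    set a := Q.coeff (2 * n + 1) with ha
    -- first kill the top coefficient
    have hS : Q - a • p (2 * n + 1) ∈ degreeLT ℝ (2 * n + 1) := by
      rw [mem_degreeLT_iff_coeff]
      intro k hk
      rw [Polynomial.coeff_sub, Polynomial.coeff_smul, smul_eq_mul]
      rcases eq_or_lt_of_le hk with h1 | h1
      · rw [← h1, hc2n1, ← ha]; ring
      · rw [mem_degreeLT_iff_coeff.mp hQ k (by omega),
          Polynomial.coeff_eq_zero_of_natDegree_lt (by omega)]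
        ring
    have hSorth : skew4 V (p (2 * n)) (Q - a • p (2 * n + 1)) = 0 := by
      apply skew_zero_of_degLT hd hde hl p _ (2 * n + 1)
        (fun k hk => h.1 k (by omega))
      · intro k hk
        rcases Nat.lt_or_ge k (2 * n) with h1 | h1
        · exact h.orth_below (by omega) (by simpa using h1)
        · have : k = 2 * n := by omega
          rw [this, skew4_self]
      · exact hS
    have ha0 : a = 0 := by
      have h0 := hpair (2 * n) (by omega)
      have hsplit : Q = (Q - a • p (2 * n + 1)) + a • p (2 * n + 1) := by ring
      rw [hsplit, skew4_add_left hd hde hl, skew4_smul_left] at h0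
      rw [skew4_antisymm (Q - a • p (2 * n + 1)) (p (2 * n)), hSorth] at h0
      have hs' : skew4 V (p (2 * n + 1)) (p (2 * n)) ≠ 0 := by
        rw [skew4_antisymm]
        simpa using hs
      have hmul : a * skew4 V (p (2 * n + 1)) (p (2 * n)) = 0 := by linarith
      rcases mul_eq_zero.mp hmul with h' | h'
      · exact h'
      · exact absurd h' hs'
    set b := Q.coeff (2 * n) with hb
    have hT : Q - b • p (2 * n) ∈ degreeLT ℝ (2 * n) := by
      rw [mem_degreeLT_iff_coeff]
      intro k hk
      rw [Polynomial.coeff_sub, Polynomial.coeff_smul, smul_eq_mul]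
      rcases eq_or_lt_of_le hk with h1 | h1
      · rw [← h1, hc2n, ← hb]; ring
      · rcases Nat.lt_or_ge k (2 * n + 2) with h2 | h2
        · have hk1 : k = 2 * n + 1 := by omega
          rw [hk1, ← ha, ha0,
            Polynomial.coeff_eq_zero_of_natDegree_lt (by rw [hp2n.2]; omega)]
          ring
        · rw [mem_degreeLT_iff_coeff.mp hQ k (by omega),
            Polynomial.coeff_eq_zero_of_natDegree_lt (by rw [hp2n.2]; omega)]
          ring
    have hTorth : skew4 V (p (2 * n + 1)) (Q - b • p (2 * n)) = 0 := by
      apply skew_zero_of_degLT hd hde hl p _ (2 * n)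
        (fun k hk => h.1 k (by omega))
      · intro k hk
        exact h.orth_below (by omega) (by omega)
      · exact hT
    have hb0 : b = 0 := by
      have h0 := hpair (2 * n + 1) (by omega)
      have hsplit : Q = (Q - b • p (2 * n)) + b • p (2 * n) := by ring
      rw [hsplit, skew4_add_left hd hde hl, skew4_smul_left,
        skew4_antisymm (Q - b • p (2 * n)) (p (2 * n + 1)), hTorth] at h0
      have hmul : b * skew4 V (p (2 * n)) (p (2 * n + 1)) = 0 := by linarith
      rcases mul_eq_zero.mp hmul with h' | h'
      · exact h'
      · exact absurd h' hs
    have hQ' : Q ∈ degreeLT ℝ (2 * n) := by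
      have heq : Q - b • p (2 * n) = Q := by rw [hb0]; simp
      rwa [heq] at hT
    exact ih (by omega) Q hQ' (fun j hj => hpair j (by omega))

end partcond

section step

variable {V : Polynomial ℝ} {c : ℕ → ℝ} {N : ℕ} {p : ℕ → Polynomial ℝ}

open Module

lemma step_unique (hd : 2 ≤ V.natDegree) (hde : Even V.natDegree) (hl : 0 < V.leadingCoeff)
    (h : PartCond V c N p) {u u' : Polynomial ℝ}
    (hu : u ∈ degreeLT ℝ (2 * N + 2)) (hu' : u' ∈ degreeLT ℝ (2 * N + 2))
    (h1 : u.coeff (2 * N) = u'.coeff (2 * N))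
    (h2 : u.coeff (2 * N + 1) = u'.coeff (2 * N + 1))
    (h3 : ∀ j, j < 2 * N → skew4 V u (p j) = 0)
    (h4 : ∀ j, j < 2 * N → skew4 V u' (p j) = 0) : u = u' := by
  have hmem : u - u' ∈ degreeLT ℝ (2 * N) := by
    rw [mem_degreeLT_iff_coeff]
    intro k hk
    rw [Polynomial.coeff_sub]
    rcases Nat.lt_or_ge k (2 * N + 2) with h5 | h5
    · rcases Nat.lt_or_ge k (2 * N + 1) with h6 | h6
      · rw [show k = 2 * N from by omega, h1]; ring
      · rw [show k = 2 * N + 1 from by omega, h2]; ring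
    · rw [mem_degreeLT_iff_coeff.mp hu k (by omega),
        mem_degreeLT_iff_coeff.mp hu' k (by omega)]
      ring
  have hpair : ∀ j, j < 2 * N → skew4 V (u - u') (p j) = 0 := by
    intro j hj
    rw [skew4_sub_left hd hde hl, h3 j hj, h4 j hj]
    ring
  have := h.radical_eq_zero hd hde hl N le_rfl (u - u') hmem hpair
  exact sub_eq_zero.mp this
  
lemma step_exists (hd : 2 ≤ V.natDegree) (hde : Even V.natDegree) (hl : 0 < V.leadingCoeff)
    (h : PartCond V c N p) (t s : ℝ) :
    ∃ u : Polynomial ℝ, u ∈ degreeLT ℝ (2 * N + 2) ∧ u.coeff (2 * N) = t ∧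
      u.coeff (2 * N + 1) = s ∧ ∀ j, j < 2 * N → skew4 V u (p j) = 0 := by
  haveI : FiniteDimensional ℝ (degreeLT ℝ (2 * N + 2)) :=
    LinearEquiv.finiteDimensional (Polynomial.degreeLTEquiv ℝ (2 * N + 2)).symm
  set Φ : degreeLT ℝ (2 * N + 2) →ₗ[ℝ] (Fin (2 * N) → ℝ) :=
    { toFun := fun Q => fun j => skew4 V Q.1 (p j)
      map_add' := fun Q R => by
        funext j
        exact skew4_add_left hd hde hl Q.1 R.1 (p j)
      map_smul' := fun a Q => by
        funext j
        exact skew4_smul_left a Q.1 (p j) } with hΦ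
  set K := LinearMap.ker Φ with hK
  set ψ : K →ₗ[ℝ] (Fin 2 → ℝ) :=
    { toFun := fun Q => fun j => if j = 0 then Q.1.1.coeff (2 * N) else Q.1.1.coeff (2 * N + 1)
      map_add' := fun Q R => by
        funext j
        by_cases hj : j = 0 <;> simp [hj, Polynomial.coeff_add]
      map_smul' := fun a Q => by
        funext j
        by_cases hj : j = 0 <;> simp [hj] } with hψ
  have hker : LinearMap.ker ψ = ⊥ := by
    rw [LinearMap.ker_eq_bot']
    rintro ⟨⟨q, hqmem⟩, hqker⟩ hq0
    have hc0 : q.coeff (2 * N) = 0 := by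
      have := congrFun hq0 0
      simpa [hψ] using this
    have hc1 : q.coeff (2 * N + 1) = 0 := by
      have := congrFun hq0 1
      simpa [hψ] using this
    have hqLT : q ∈ degreeLT ℝ (2 * N) := by
      rw [mem_degreeLT_iff_coeff]
      intro k hk
      rcases Nat.lt_or_ge k (2 * N + 1) with h5 | h5
      · rwa [show k = 2 * N from by omega]
      · rcases Nat.lt_or_ge k (2 * N + 2) with h6 | h6
        · rwa [show k = 2 * N + 1 from by omega]
        · exact mem_degreeLT_iff_coeff.mp hqmem k (by omega)
    have hqpair : ∀ j, j < 2 * N → skew4 V q (p j) = 0 := by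
      intro j hj
      have := LinearMap.mem_ker.mp hqker
      have := congrFun this ⟨j, hj⟩
      simpa [hΦ] using this
    have hq := h.radical_eq_zero hd hde hl N le_rfl q hqLT hqpair
    apply Subtype.ext
    apply Subtype.ext
    exact hq
  have hinj : Function.Injective ψ := fun x y hxy => sub_eq_zero.mp (LinearMap.ker_eq_bot'.mp hker (x - y) (by have h' := LinearMap.map_sub ψ x y; rw [hxy, sub_self] at h'; exact h'))
  have hfinW : finrank ℝ (degreeLT ℝ (2 * N + 2)) = 2 * N + 2 := by
    rw [(Polynomial.degreeLTEquiv ℝ (2 * N + 2)).finrank_eq, finrank_fin_fun]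
  have hrn := LinearMap.finrank_range_add_finrank_ker Φ
  rw [← hK] at hrn
  have hrange : finrank ℝ (LinearMap.range Φ) ≤ 2 * N := by
    have := Submodule.finrank_le (LinearMap.range Φ)
    rwa [finrank_fin_fun] at this
  have hKge : 2 ≤ finrank ℝ K := by
    rw [hfinW] at hrn
    omega
  have hKle : finrank ℝ K ≤ 2 := by
    have := LinearMap.finrank_le_finrank_of_injective hinj
    rwa [finrank_fin_fun] at this
  have hrψ : LinearMap.range ψ = ⊤ := by
    apply Submodule.eq_top_of_finrank_eq
    rw [LinearMap.finrank_range_of_inj hinj, finrank_fin_fun]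
    omega
  have hmem : (fun j : Fin 2 => if j = 0 then t else s) ∈ LinearMap.range ψ := by
    rw [hrψ]; trivial
  obtain ⟨Q, hQ⟩ := hmem
  refine ⟨Q.1.1, Q.1.2, ?_, ?_, ?_⟩
  · have := congrFun hQ 0
    simpa [hψ] using this
  · have := congrFun hQ 1
    simpa [hψ] using this
  · intro j hj
    have h0 : Φ Q.1 = 0 := LinearMap.mem_ker.mp Q.2
    exact congrFun h0 ⟨j, hj⟩

end step

lemma mem_degreeLT_of_natDegree_lt {Q : Polynomial ℝ} {m : ℕ} (h : Q.natDegree < m) :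
    Q ∈ degreeLT ℝ m :=
  Polynomial.mem_degreeLT.mpr (lt_of_le_of_lt Polynomial.degree_le_natDegree
    (by exact_mod_cast h))

lemma partCond_existsUnique {V : Polynomial ℝ} (hd : 2 ≤ V.natDegree)
    (hde : Even V.natDegree) (hl : 0 < V.leadingCoeff) (c : ℕ → ℝ) :
    ∀ N : ℕ, ∃! p : ℕ → Polynomial ℝ, PartCond V c N p := by
  intro N
  induction N with
  | zero =>
    refine ⟨fun _ => 0, ⟨?_, ?_, ?_, ?_, ?_, ?_⟩, ?_⟩
    · intro k hk; omega
    · intro n m hn _; omega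
    · intro n m hn _; omega
    · intro n m _ hn _; omega
    · intro m hm; omega
    · intro k _; rfl
    · intro q hq
      funext k
      exact hq.2.2.2.2.2 k (by omega)
  | succ N ih =>
    obtain ⟨p, hp, hpuniq⟩ := ih
    obtain ⟨u, humem, huc0, huc1, hupair⟩ := step_exists hd hde hl hp 1 0
    obtain ⟨v, hvmem, hvc0, hvc1, hvpair⟩ := step_exists hd hde hl hp (c N) 1
    have huLT : u ∈ degreeLT ℝ (2 * N + 1) := by
      rw [mem_degreeLT_iff_coeff]
      intro k hk
      rcases Nat.lt_or_ge k (2 * N + 2) with h5 | h5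
      · rw [show k = 2 * N + 1 from by omega]; exact huc1
      · exact mem_degreeLT_iff_coeff.mp humem k (by omega)
    have humonic : u.Monic ∧ u.natDegree = 2 * N := monic_of_top_coeff huLT huc0
    have hvmonic : v.Monic ∧ v.natDegree = 2 * N + 1 := monic_of_top_coeff hvmem hvc1
    set p' : ℕ → Polynomial ℝ := fun k =>
      if k = 2 * N then u else if k = 2 * N + 1 then v else p k with hp'
    have hp'lt : ∀ k, k < 2 * N → p' k = p k := by
      intro k hk
      simp only [hp', if_neg (by omega : ¬ k = 2 * N), if_neg (by omega : ¬ k = 2 * N + 1)]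
    have hp'e : p' (2 * N) = u := by simp [hp']
    have hp'o : p' (2 * N + 1) = v := by
      have h1 : ¬ (2 * N + 1 = 2 * N) := by omega
      simp [hp', h1]
    have hcond : PartCond V c (N + 1) p' := by
      refine ⟨?_, ?_, ?_, ?_, ?_, ?_⟩
      · intro k hk
        rcases Nat.lt_or_ge k (2 * N) with h1 | h1
        · rw [hp'lt k h1]; exact hp.1 k h1
        · rcases Nat.lt_or_ge k (2 * N + 1) with h2 | h2
          · rw [show k = 2 * N from by omega, hp'e]
            exact ⟨humonic.1, humonic.2⟩
          · rw [show k = 2 * N + 1 from by omega, hp'o]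
            exact ⟨hvmonic.1, hvmonic.2⟩
      · intro n m hn hm
        rcases Nat.lt_or_ge n N with h1 | h1 <;> rcases Nat.lt_or_ge m N with h2 | h2
        · rw [hp'lt (2 * n) (by omega), hp'lt (2 * m) (by omega)]
          exact hp.2.1 n m (by omega) (by omega)
        · rw [show m = N from by omega, hp'lt (2 * n) (by omega), hp'e, skew4_antisymm,
            hupair (2 * n) (by omega), neg_zero]
        · rw [show n = N from by omega, hp'lt (2 * m) (by omega), hp'e]
          exact hupair (2 * m) (by omega)
        · rw [show n = N from by omega, show m = N from by omega, hp'e, skew4_self]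
      · intro n m hn hm
        rcases Nat.lt_or_ge n N with h1 | h1 <;> rcases Nat.lt_or_ge m N with h2 | h2
        · rw [hp'lt (2 * n + 1) (by omega), hp'lt (2 * m + 1) (by omega)]
          exact hp.2.2.1 n m (by omega) (by omega)
        · rw [show m = N from by omega, hp'lt (2 * n + 1) (by omega), hp'o, skew4_antisymm,
            hvpair (2 * n + 1) (by omega), neg_zero]
        · rw [show n = N from by omega, hp'lt (2 * m + 1) (by omega), hp'o]
          exact hvpair (2 * m + 1) (by omega)
        · rw [show n = N from by omega, show m = N from by omega, hp'o, skew4_self]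
      · intro n m hnm hn hm
        rcases Nat.lt_or_ge n N with h1 | h1 <;> rcases Nat.lt_or_ge m N with h2 | h2
        · rw [hp'lt (2 * n) (by omega), hp'lt (2 * m + 1) (by omega)]
          exact hp.2.2.2.1 n m hnm (by omega) (by omega)
        · rw [show m = N from by omega, hp'lt (2 * n) (by omega), hp'o, skew4_antisymm,
            hvpair (2 * n) (by omega), neg_zero]
        · rw [show n = N from by omega, hp'lt (2 * m + 1) (by omega), hp'e]
          exact hupair (2 * m + 1) (by omega)
        · omega
      · intro m hm
        rcases Nat.lt_or_ge m N with h1 | h1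
        · rw [hp'lt (2 * m + 1) (by omega)]; exact hp.2.2.2.2.1 m (by omega)
        · rw [show m = N from by omega, hp'o]; exact hvc0
      · intro k hk
        simp only [hp', if_neg (by omega : ¬ k = 2 * N), if_neg (by omega : ¬ k = 2 * N + 1)]
        exact hp.2.2.2.2.2 k (by omega)
    refine ⟨p', hcond, ?_⟩
    intro q hq
    -- the truncation of q satisfies PartCond N
    set t : ℕ → Polynomial ℝ := fun k => if k < 2 * N then q k else 0 with ht
    have ht1 : ∀ k, k < 2 * N → t k = q k := by
      intro k hk; simp only [ht, if_pos hk]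
    have ht2 : ∀ k, 2 * N ≤ k → t k = 0 := by
      intro k hk; simp only [ht, if_neg (by omega : ¬ k < 2 * N)]
    have htr : PartCond V c N t := by
      refine ⟨?_, ?_, ?_, ?_, ?_, ?_⟩
      · intro k hk; rw [ht1 k hk]; exact hq.1 k (by omega)
      · intro n m hn hm
        rw [ht1 (2 * n) (by omega), ht1 (2 * m) (by omega)]
        exact hq.2.1 n m (by omega) (by omega)
      · intro n m hn hm
        rw [ht1 (2 * n + 1) (by omega), ht1 (2 * m + 1) (by omega)]
        exact hq.2.2.1 n m (by omega) (by omega)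
      · intro n m hnm hn hm
        rw [ht1 (2 * n) (by omega), ht1 (2 * m + 1) (by omega)]
        exact hq.2.2.2.1 n m hnm (by omega) (by omega)
      · intro m hm
        rw [ht1 (2 * m + 1) (by omega)]
        exact hq.2.2.2.2.1 m (by omega)
      · exact ht2
    have hqp := hpuniq _ htr
    have hqeq : ∀ k, k < 2 * N → q k = p k := by
      intro k hk
      rw [← ht1 k hk, hqp]
    -- q (2 N) = u
    have hq2N := hq.1 (2 * N) (by omega)
    have hq2N1 := hq.1 (2 * N + 1) (by omega)
    have hque : q (2 * N) = u := by
      apply step_unique hd hde hl hp (mem_degreeLT_of_natDegree_lt (by omega)) humem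
      · rw [huc0]
        have := hq2N.1
        rwa [Polynomial.Monic, Polynomial.leadingCoeff, hq2N.2] at this
      · rw [huc1]
        exact Polynomial.coeff_eq_zero_of_natDegree_lt (by omega)
      · intro j hj
        have := PartCond.orth hq (k := 2 * N) (j := j) (by omega) (by omega) (by omega)
        rwa [hqeq j hj] at this
      · exact hupair
    have hquo : q (2 * N + 1) = v := by
      apply step_unique hd hde hl hp (mem_degreeLT_of_natDegree_lt (by omega)) hvmem
      · rw [hvc0]
        exact hq.2.2.2.2.1 N (by omega)
      · rw [hvc1]
        have := hq2N1.1
        rwa [Polynomial.Monic, Polynomial.leadingCoeff, hq2N1.2] at this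
      · intro j hj
        have := PartCond.orth hq (k := 2 * N + 1) (j := j) (by omega) (by omega) (by omega)
        rwa [hqeq j hj] at this
      · exact hvpair
    funext k
    rcases Nat.lt_or_ge k (2 * N) with h1 | h1
    · rw [hp'lt k h1, hqeq k h1]
    · rcases Nat.lt_or_ge k (2 * N + 1) with h2 | h2
      · rw [show k = 2 * N from by omega, hp'e, hque]
      · rcases Nat.lt_or_ge k (2 * N + 2) with h3 | h3
        · rw [show k = 2 * N + 1 from by omega, hp'o, hquo]
        · rw [hq.2.2.2.2.2 k (by omega)]
          simp only [hp', if_neg (by omega : ¬ k = 2 * N), if_neg (by omega : ¬ k = 2 * N + 1)]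
          exact (hp.2.2.2.2.2 k (by omega)).symm

lemma PartCond.truncate {V : Polynomial ℝ} {c : ℕ → ℝ} {Nn : ℕ} {q : ℕ → Polynomial ℝ}
    (hq : PartCond V c Nn q) (M : ℕ) (hMN : M ≤ Nn) :
    PartCond V c M (fun k => if k < 2 * M then q k else 0) := by
  set t : ℕ → Polynomial ℝ := fun k => if k < 2 * M then q k else 0 with ht
  have ht1 : ∀ k, k < 2 * M → t k = q k := by
    intro k hk; simp only [ht, if_pos hk]
  refine ⟨?_, ?_, ?_, ?_, ?_, ?_⟩
  · intro k hk; rw [ht1 k hk]; exact hq.1 k (by omega)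
  · intro n m hn hm
    rw [ht1 (2 * n) (by omega), ht1 (2 * m) (by omega)]
    exact hq.2.1 n m (by omega) (by omega)
  · intro n m hn hm
    rw [ht1 (2 * n + 1) (by omega), ht1 (2 * m + 1) (by omega)]
    exact hq.2.2.1 n m (by omega) (by omega)
  · intro n m hnm hn hm
    rw [ht1 (2 * n) (by omega), ht1 (2 * m + 1) (by omega)]
    exact hq.2.2.2.1 n m hnm (by omega) (by omega)
  · intro m hm
    rw [ht1 (2 * m + 1) (by omega)]
    exact hq.2.2.2.2.1 m (by omega)
  · intro k hk; simp only [ht, if_neg (by omega : ¬ k < 2 * M)]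

/-- For each prescribed sequence of next-to-leading coefficients of the odd polynomials,
there is a unique skew-orthogonal sequence. -/
theorem skewOrthSeq_exists_unique
    (D : ℕ) (hD : 2 ≤ D) (hDeven : Even D)
    (V : Polynomial ℝ) (hVdeg : V.natDegree = D) (hVlead : 0 < V.leadingCoeff)
    (c : ℕ → ℝ) :
    ∃! P : ℕ → Polynomial ℝ,
      IsSkewOrthSeq V P ∧ ∀ n, (P (2 * n + 1)).coeff (2 * n) = c n := by
  have hd : 2 ≤ V.natDegree := by rw [hVdeg]; exact hD
  have hde : Even V.natDegree := by rw [hVdeg]; exact hDeven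
  have hex := partCond_existsUnique hd hde hVlead c
  choose F hF using hex
  have hFc : ∀ N, PartCond V c N (F N) := fun N => (hF N).1
  have hFu : ∀ N q, PartCond V c N q → q = F N := fun N q h => (hF N).2 q h
  have hcoh : ∀ M Nn, M ≤ Nn → ∀ k, k < 2 * M → F Nn k = F M k := by
    intro M Nn hMN k hk
    have htr := (hFc Nn).truncate M hMN
    have heq := hFu M _ htr
    have h1 := congrFun heq k
    rw [if_pos hk] at h1
    exact h1
  set P : ℕ → Polynomial ℝ := fun k => F (k + 1) k with hP
  have hPF : ∀ N k, k < 2 * N → P k = F N k := by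
    intro N k hk
    have h1 : F (max N (k + 1)) k = F (k + 1) k :=
      hcoh (k + 1) (max N (k + 1)) (le_max_right _ _) k (by omega)
    have h2 : F (max N (k + 1)) k = F N k :=
      hcoh N (max N (k + 1)) (le_max_left _ _) k hk
    show F (k + 1) k = F N k
    rw [← h1, h2]
  refine ⟨P, ⟨⟨?_, ?_, ?_, ?_⟩, ?_⟩, ?_⟩
  · intro n
    rw [hPF (n + 1) n (by omega)]
    exact (hFc (n + 1)).1 n (by omega)
  · intro n m
    rw [hPF (n + m + 1) (2 * n) (by omega), hPF (n + m + 1) (2 * m) (by omega)]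
    exact (hFc (n + m + 1)).2.1 n m (by omega) (by omega)
  · intro n m
    rw [hPF (n + m + 1) (2 * n + 1) (by omega), hPF (n + m + 1) (2 * m + 1) (by omega)]
    exact (hFc (n + m + 1)).2.2.1 n m (by omega) (by omega)
  · intro n m hnm
    rw [hPF (n + m + 1) (2 * n) (by omega), hPF (n + m + 1) (2 * m + 1) (by omega)]
    exact (hFc (n + m + 1)).2.2.2.1 n m hnm (by omega) (by omega)
  · intro n
    rw [hPF (n + 1) (2 * n + 1) (by omega)]
    exact (hFc (n + 1)).2.2.2.2.1 n (by omega)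
  · rintro q ⟨⟨hq1, hq2, hq3, hq4⟩, hq5⟩
    have hqPart : ∀ N, PartCond V c N (fun k => if k < 2 * N then q k else 0) := by
      intro N
      set t : ℕ → Polynomial ℝ := fun k => if k < 2 * N then q k else 0 with ht
      have ht1 : ∀ k, k < 2 * N → t k = q k := by
        intro k hk; simp only [ht, if_pos hk]
      refine ⟨?_, ?_, ?_, ?_, ?_, ?_⟩
      · intro k hk; rw [ht1 k hk]; exact hq1 k
      · intro n m hn hm
        rw [ht1 (2 * n) (by omega), ht1 (2 * m) (by omega)]
        exact hq2 n m
      · intro n m hn hm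
        rw [ht1 (2 * n + 1) (by omega), ht1 (2 * m + 1) (by omega)]
        exact hq3 n m
      · intro n m hnm hn hm
        rw [ht1 (2 * n) (by omega), ht1 (2 * m + 1) (by omega)]
        exact hq4 n m hnm
      · intro m hm
        rw [ht1 (2 * m + 1) (by omega)]
        exact hq5 m
      · intro k hk; simp only [ht, if_neg (by omega : ¬ k < 2 * N)]
    funext k
    have heq := hFu (k + 1) _ (hqPart (k + 1))
    have h1 := congrFun heq k
    rw [if_pos (by omega : k < 2 * (k + 1))] at h1
    exact h1
end

section
/- The dual polynomial Ψ_{2n} has at least 2n+1 distinct real zeros (not counting multiplicity), of which at least 2n+2−D/2 are simple zeros. -/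
open Polynomial MeasureTheory

/-- The dual polynomial `Ψ = −(1/(γD)) e^V (P e^{−V})' = −(1/(γD)) (P' − V'·P)`. -/
noncomputable def dualPoly (V : Polynomial ℝ) (γ : ℝ) (D : ℕ) (P : Polynomial ℝ) :
    Polynomial ℝ :=
  Polynomial.C (-(1 / (γ * D))) * (derivative P - derivative V * P)

namespace DualPolyAux

open Filter Real

/-! ### Analytic preliminaries -/

lemma tendsto_eval_mul_exp_atTop (p q : Polynomial ℝ) (hq2 : 2 ≤ q.natDegree)
    (hql : q.leadingCoeff < 0) :
    Tendsto (fun x => p.eval x * Real.exp (q.eval x)) atTop (nhds 0) := by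
  have hq0 : q ≠ 0 := fun h => by simp [h] at hql
  have hdX : (X : Polynomial ℝ).degree < q.degree := by
    rw [degree_X, degree_eq_natDegree hq0]
    exact_mod_cast lt_of_lt_of_le (by norm_num) hq2
  have hlead : (X + q).leadingCoeff = q.leadingCoeff := leadingCoeff_add_of_degree_lt hdX
  have hdeg : (X + q).degree = q.degree := by
    rw [degree_add_eq_right_of_degree_lt hdX]
  have h2 : Tendsto (fun x => (X + q).eval x) atTop atBot := by
    apply tendsto_atBot_of_leadingCoeff_nonpos
    · rw [hdeg, degree_eq_natDegree hq0]
      exact_mod_cast lt_of_lt_of_le (by norm_num) hq2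
    · rw [hlead]; exact hql.le
  have h3 : Tendsto (fun x => Real.exp ((X + q).eval x)) atTop (nhds 0) :=
    Real.tendsto_exp_atBot.comp h2
  have h1 : Tendsto (fun x => p.eval x / Real.exp x) atTop (nhds 0) :=
    p.tendsto_div_exp_atTop
  have := h1.mul h3
  rw [mul_zero] at this
  convert this using 2 with x
  simp only [eval_add, eval_X, Real.exp_add]
  field_simp

lemma X_add_natDegree (q : Polynomial ℝ) (hq2 : 2 ≤ q.natDegree) (hql : q.leadingCoeff < 0) :
    2 ≤ (X + q).natDegree ∧ (X + q).leadingCoeff < 0 := by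
  have hq0 : q ≠ 0 := fun h => by simp [h] at hql
  have hdX : (X : Polynomial ℝ).degree < q.degree := by
    rw [degree_X, degree_eq_natDegree hq0]
    exact_mod_cast lt_of_lt_of_le (by norm_num) hq2
  constructor
  · have : (X + q).degree = q.degree := degree_add_eq_right_of_degree_lt hdX
    have h0 : (X + q).natDegree = q.natDegree := natDegree_eq_of_degree_eq this
    omega
  · rw [leadingCoeff_add_of_degree_lt hdX]; exact hql

lemma isBigO_eval_mul_exp (q : Polynomial ℝ) (hq2 : 2 ≤ q.natDegree)
    (hql : q.leadingCoeff < 0) (p : Polynomial ℝ) :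
    (fun x => p.eval x * Real.exp (q.eval x)) =O[atTop] (fun x => Real.exp (-x)) := by
  obtain ⟨h2, hneg⟩ := X_add_natDegree q hq2 hql
  have h := tendsto_eval_mul_exp_atTop p (X + q) h2 hneg
  rw [Asymptotics.isBigO_iff]
  refine ⟨1, ?_⟩
  filter_upwards [h.norm.eventually (eventually_le_nhds (by simp : ‖(0:ℝ)‖ < 1))] with x hx
  have key : p.eval x * Real.exp (q.eval x) =
      (p.eval x * Real.exp ((X + q).eval x)) * Real.exp (-x) := by
    simp only [eval_add, eval_X]
    rw [mul_assoc, ← Real.exp_add]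
    ring_nf
  rw [key, norm_mul, one_mul]
  exact mul_le_of_le_one_left (norm_nonneg _) hx

lemma integrable_eval_mul_exp (V : Polynomial ℝ) (hd2 : 2 ≤ V.natDegree)
    (hdev : Even V.natDegree) (hl : 0 < V.leadingCoeff) (p : Polynomial ℝ) :
    Integrable (fun x => p.eval x * Real.exp (-2 * V.eval x)) := by
  set q : Polynomial ℝ := C (-2) * V with hq
  have hV0 : V ≠ 0 := fun h => by simp [h] at hl
  have hqdeg : q.natDegree = V.natDegree := by
    rw [hq, natDegree_C_mul (by norm_num : (-2:ℝ) ≠ 0)]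
  have hqlead : q.leadingCoeff = -2 * V.leadingCoeff := by
    rw [hq, leadingCoeff_mul, leadingCoeff_C]
  have hqlead' : q.leadingCoeff < 0 := by rw [hqlead]; nlinarith
  have heval : ∀ x, q.eval x = -2 * V.eval x := by intro x; simp [hq]
  have htop : (fun x => p.eval x * Real.exp (-2 * V.eval x)) =O[atTop]
      (fun x => Real.exp (-x)) := by
    have := isBigO_eval_mul_exp q (by omega) hqlead' p
    simpa only [heval] using this
  set qq : Polynomial ℝ := q.comp (-X) with hqq
  set pp : Polynomial ℝ := p.comp (-X) with hpp
  have hnX : (-X : Polynomial ℝ).natDegree = 1 := by simp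
  have hqqdeg : qq.natDegree = q.natDegree := by
    rw [hqq, natDegree_comp, hnX, mul_one]
  have hqqlead : qq.leadingCoeff = q.leadingCoeff := by
    rw [hqq, leadingCoeff_comp (by rw [hnX]; norm_num)]
    have : (-X : Polynomial ℝ).leadingCoeff = -1 := by simp
    rw [this, hqdeg]
    obtain ⟨k, hk⟩ := hdev
    rw [hk]
    rw [show k + k = 2 * k by ring, pow_mul]
    norm_num
  have hbotO : (fun x => pp.eval x * Real.exp (qq.eval x)) =O[atTop]
      (fun x => Real.exp (-x)) :=
    isBigO_eval_mul_exp qq (by omega) (by rw [hqqlead]; exact hqlead') pp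
  have hbot : (fun x => p.eval x * Real.exp (-2 * V.eval x)) =O[atBot]
      (fun x => Real.exp x) := by
    have := hbotO.comp_tendsto tendsto_neg_atBot_atTop
    have he : ((fun x => pp.eval x * Real.exp (qq.eval x)) ∘ (fun x : ℝ => -x)) =
        fun x => p.eval x * Real.exp (-2 * V.eval x) := by
      funext x
      simp only [Function.comp, hpp, hqq, eval_comp, eval_neg, eval_X, neg_neg, heval]
    have he2 : ((fun x : ℝ => Real.exp (-x)) ∘ (fun x : ℝ => -x)) = fun x => Real.exp x := by
      funext x; simp
    rwa [he, he2] at this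
  have hcont : Continuous (fun x => p.eval x * Real.exp (-2 * V.eval x)) :=
    p.continuous.mul ((Real.continuous_exp.comp ((continuous_const.mul V.continuous))))
  exact hcont.locallyIntegrable.integrable_of_isBigO_atBot_atTop hbot
    ⟨Set.Iic 0, Iic_mem_atBot 0, integrableOn_exp_Iic 0⟩ htop
    ⟨Set.Ioi 0, Ioi_mem_atTop 0, by simpa using exp_neg_integrableOn_Ioi 0 one_pos⟩

/-! ### The weighted integral functional -/

/-- The weighted integral functional `J(q) = ∫ q e^{−2V}`. -/
noncomputable def Jf (V : Polynomial ℝ) (q : Polynomial ℝ) : ℝ :=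
  ∫ x : ℝ, q.eval x * Real.exp (-2 * V.eval x)

section Jlemmas

variable (V : Polynomial ℝ) (hd2 : 2 ≤ V.natDegree) (hdev : Even V.natDegree)
  (hl : 0 < V.leadingCoeff)

lemma Jf_smul (c : ℝ) (q : Polynomial ℝ) : Jf V (C c * q) = c * Jf V q := by
  unfold Jf
  rw [← integral_const_mul]
  congr 1; funext x; simp [mul_assoc]

include hd2 hdev hl

lemma Jf_add (q1 q2 : Polynomial ℝ) : Jf V (q1 + q2) = Jf V q1 + Jf V q2 := by
  unfold Jf
  rw [← integral_add (integrable_eval_mul_exp V hd2 hdev hl q1)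
    (integrable_eval_mul_exp V hd2 hdev hl q2)]
  congr 1; funext x; simp [add_mul]

lemma Jf_ibp (r : Polynomial ℝ) :
    Jf V (derivative r - C 2 * (derivative V * r)) = 0 := by
  unfold Jf
  apply integral_eq_zero_of_hasDerivAt_of_integrable
    (f := fun x => r.eval x * Real.exp (-2 * V.eval x))
  · intro x
    have h1 := r.hasDerivAt x
    have h2 : HasDerivAt (fun y => Real.exp (-2 * V.eval y))
        (Real.exp (-2 * V.eval x) * (-2 * (derivative V).eval x)) x :=
      ((V.hasDerivAt x).const_mul (-2)).exp
    have := h1.mul h2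
    convert this using 1
    · rfl
    · rfl
    simp only [eval_sub, eval_mul, eval_ofNat, eval_C]
    ring
  · exact integrable_eval_mul_exp V hd2 hdev hl _
  · exact integrable_eval_mul_exp V hd2 hdev hl _

lemma skew4_eq_Jf (A B : Polynomial ℝ) :
    skew4 V A B = - Jf V ((derivative A - derivative V * A) * B) := by
  have hibp := Jf_ibp V hd2 hdev hl (A * B)
  have hid : derivative (A * B) - C 2 * (derivative V * (A * B)) =
      (A * derivative B - derivative A * B) +
        C (2:ℝ) * ((derivative A - derivative V * A) * B) := by
    have hC : (C (2:ℝ)) = (2 : Polynomial ℝ) := map_ofNat C 2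
    rw [derivative_mul, hC]; ring
  rw [hid, Jf_add V hd2 hdev hl, Jf_smul] at hibp
  have hsk : skew4 V A B = (1/2) * Jf V (A * derivative B - derivative A * B) := by
    unfold skew4 Jf
    congr 1; congr 1; funext x; simp
  rw [hsk]
  linarith

lemma Jf_pos (h : Polynomial ℝ) (h0 : h ≠ 0)
    (hnn : ∀ x, 0 ≤ h.eval x) : 0 < Jf V h := by
  unfold Jf
  set g : ℝ → ℝ := fun x => h.eval x * Real.exp (-2 * V.eval x) with hg
  have hgnn : 0 ≤ g := fun x => mul_nonneg (hnn x) (Real.exp_pos _).le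
  have hgint : Integrable g := integrable_eval_mul_exp V hd2 hdev hl h
  rw [integral_pos_iff_support_of_nonneg hgnn hgint]
  have hcompl : (Function.support g)ᶜ ⊆ {x | h.IsRoot x} := by
    intro x hx
    simp only [Function.mem_support, not_not, Set.mem_compl_iff] at hx
    have : h.eval x = 0 := by
      by_contra hne
      exact (mul_ne_zero hne (Real.exp_ne_zero _)) hx
    exact this
  have hfin : ((Function.support g)ᶜ).Finite :=
    (h.finite_setOf_isRoot h0).subset hcompl
  by_contra hzero
  push_neg at hzero
  have h1 : volume (Function.support g) = 0 := le_antisymm hzero zero_le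
  have h2 : volume (Set.univ : Set ℝ) ≤
      volume (Function.support g) + volume (Function.support g)ᶜ := by
    rw [← Set.union_compl_self (Function.support g)]; exact measure_union_le _ _
  rw [h1, hfin.measure_zero, Real.volume_univ] at h2
  simp at h2

end Jlemmas

/-! ### Algebraic preliminaries -/

lemma sign_of_even_mult : ∀ N : ℕ, ∀ h : Polynomial ℝ, h.natDegree ≤ N → h ≠ 0 →
    (∀ r : ℝ, h.IsRoot r → Even (h.rootMultiplicity r)) →
    (∀ x, 0 ≤ h.eval x) ∨ (∀ x, h.eval x ≤ 0) := by
  intro N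
  induction N with
  | zero =>
    intro h hdeg h0 _
    obtain ⟨c, rfl⟩ := natDegree_eq_zero.mp (Nat.le_zero.mp hdeg)
    rcases le_or_gt 0 c with hc | hc
    · exact Or.inl fun x => by simpa using hc
    · exact Or.inr fun x => by simpa using hc.le
  | succ N ih =>
    intro h hdeg h0 hmult
    by_cases hroot : ∃ r : ℝ, h.IsRoot r
    · obtain ⟨r, hr⟩ := hroot
      have hpos : 0 < h.rootMultiplicity r := (rootMultiplicity_pos h0).mpr hr
      have heven := hmult r hr
      have h2le : 2 ≤ h.rootMultiplicity r := by
        rcases heven with ⟨k, hk⟩; omega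
      have hdvd : (X - C r) ^ 2 ∣ h :=
        dvd_trans (pow_dvd_pow _ h2le) (h.pow_rootMultiplicity_dvd r)
      obtain ⟨h₁, hh⟩ := hdvd
      have h₁0 : h₁ ≠ 0 := by rintro rfl; simp at hh; exact h0 hh
      have hXr : ((X - C r) ^ 2 : Polynomial ℝ) ≠ 0 := pow_ne_zero _ (X_sub_C_ne_zero r)
      have hdeg1 : h₁.natDegree ≤ N := by
        have := natDegree_mul hXr h₁0
        rw [hh, this] at hdeg
        have : ((X - C r) ^ 2 : Polynomial ℝ).natDegree = 2 := by
          rw [natDegree_pow, natDegree_X_sub_C]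
        omega
      have hmult1 : ∀ a : ℝ, h₁.IsRoot a → Even (h₁.rootMultiplicity a) := by
        intro a ha
        have hha : h.IsRoot a := by
          rw [hh]; simp [IsRoot] at ha ⊢; right; exact ha
        have hsplit : h.rootMultiplicity a =
            rootMultiplicity a ((X - C r) ^ 2) + h₁.rootMultiplicity a := by
          rw [hh]; exact rootMultiplicity_mul (hh ▸ h0)
        have hXmult : rootMultiplicity a ((X - C r) ^ 2 : Polynomial ℝ) =
            2 * rootMultiplicity a (X - C r) := by
          rw [sq]
          rw [rootMultiplicity_mul (mul_ne_zero (X_sub_C_ne_zero r) (X_sub_C_ne_zero r))]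
          ring
        have := hmult a hha
        rw [hsplit, hXmult] at this
        rcases this with ⟨k, hk⟩
        exact ⟨k - rootMultiplicity a (X - C r), by omega⟩
      rcases ih h₁ hdeg1 h₁0 hmult1 with hc | hc
      · left; intro x
        rw [hh]
        simp only [eval_mul, eval_pow, eval_sub, eval_X, eval_C]
        exact mul_nonneg (sq_nonneg _) (hc x)
      · right; intro x
        rw [hh]
        simp only [eval_mul, eval_pow, eval_sub, eval_X, eval_C]
        exact mul_nonpos_of_nonneg_of_nonpos (sq_nonneg _) (hc x)
    · push_neg at hroot
      by_contra hcon
      push_neg at hcon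
      obtain ⟨⟨a, ha⟩, ⟨b, hb⟩⟩ := hcon
      have hcont : Continuous (fun x => h.eval x) := h.continuous
      rcases le_total a b with hab | hab
      · have : (0:ℝ) ∈ Set.Icc (h.eval a) (h.eval b) := ⟨ha.le, hb.le⟩
        obtain ⟨c, _, hc⟩ := intermediate_value_Icc hab hcont.continuousOn this
        exact hroot c hc
      · have : (0:ℝ) ∈ Set.Icc (h.eval a) (h.eval b) := ⟨ha.le, hb.le⟩
        obtain ⟨c, _, hc⟩ := intermediate_value_Icc' hab hcont.continuousOn this
        exact hroot c hc

lemma prod_linear_monic (s : Finset ℝ) : (∏ r ∈ s, (X - C r)).Monic :=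
  monic_prod_of_monic _ _ (fun r _ => monic_X_sub_C r)

lemma rootMultiplicity_prod_linear (s : Finset ℝ) (a : ℝ) :
    rootMultiplicity a (∏ r ∈ s, (X - C r)) = if a ∈ s then 1 else 0 := by
  induction s using Finset.induction with
  | empty => simp [rootMultiplicity_eq_zero (show ¬IsRoot 1 a by simp [IsRoot])]
  | @insert r s hr ih =>
    rw [Finset.prod_insert hr,
      rootMultiplicity_mul (mul_ne_zero (X_sub_C_ne_zero r) (prod_linear_monic s).ne_zero)]
    rw [ih, rootMultiplicity_X_sub_C]
    by_cases har : a = r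
    · subst har
      simp [hr]
    · simp [har, Finset.mem_insert]

lemma W_facts (V : Polynomial ℝ) (D : ℕ) (hD : 2 ≤ D) (γ : ℝ) (hγ : 0 < γ)
    (hVdeg : V.natDegree = D) (hVlead : V.leadingCoeff = γ)
    (A : Polynomial ℝ) (hA : A.Monic) (k : ℕ) (hAdeg : A.natDegree = k) :
    (derivative A - derivative V * A).natDegree = k + D - 1 ∧
      derivative A - derivative V * A ≠ 0 := by
  have hVD : V.coeff D = γ := by rw [← hVdeg, coeff_natDegree, hVlead]
  have hV'c : (derivative V).coeff (D - 1) = γ * D := by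
    rw [coeff_derivative, show D - 1 + 1 = D by omega, hVD]
    rw [Nat.cast_sub (by omega : 1 ≤ D)]
    push_cast
    ring
  have hγD : γ * (D:ℝ) ≠ 0 := by positivity
  have hV'deg : (derivative V).natDegree = D - 1 := by
    refine le_antisymm ?_ (le_natDegree_of_ne_zero (by rw [hV'c]; exact hγD))
    have := natDegree_derivative_le V
    omega
  have hV'lead : (derivative V).leadingCoeff = γ * D := by
    rw [leadingCoeff, hV'deg, hV'c]
  have hcoeff : (derivative A - derivative V * A).coeff (k + D - 1) = -(γ * D) := by
    rw [coeff_sub]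
    have h1 : (derivative A).coeff (k + D - 1) = 0 := by
      apply coeff_eq_zero_of_natDegree_lt
      have := natDegree_derivative_le A
      omega
    have h2 : (derivative V * A).coeff (k + D - 1) = γ * D := by
      have : k + D - 1 = (derivative V).natDegree + A.natDegree := by omega
      rw [this, coeff_mul_degree_add_degree, hV'lead, hA.leadingCoeff, mul_one]
    rw [h1, h2, zero_sub]
  have hne : derivative A - derivative V * A ≠ 0 := fun h => by
    rw [h, coeff_zero] at hcoeff; exact hγD (by linarith [hcoeff])
  refine ⟨le_antisymm ?_ (le_natDegree_of_ne_zero (by rw [hcoeff]; simpa using hγD)), hne⟩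
  refine (natDegree_sub_le _ _).trans ?_
  have h3 : (derivative V * A).natDegree ≤ k + D - 1 := by
    refine (natDegree_mul_le).trans ?_
    omega
  have h4 : (derivative A).natDegree ≤ k + D - 1 := by
    have := natDegree_derivative_le A
    omega
  omega

lemma simple_root_deriv (h : Polynomial ℝ) (h0 : h ≠ 0) (r : ℝ)
    (hr : h.rootMultiplicity r = 1) : (derivative h).eval r ≠ 0 := by
  have hroot : h.IsRoot r := (rootMultiplicity_pos h0).mp (by omega)
  have hd : rootMultiplicity r (derivative h) = 0 := by
    rw [derivative_rootMultiplicity_of_root hroot, hr]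
  intro heval
  have hdh : derivative h ≠ 0 := by
    intro hz
    have := natDegree_eq_zero_of_derivative_eq_zero hz
    obtain ⟨c, rfl⟩ := natDegree_eq_zero.mp this
    have hc : c ≠ 0 := fun hc => h0 (by rw [hc, map_zero])
    rw [rootMultiplicity_eq_zero (by simp [IsRoot, hc])] at hr
    omega
  have := (rootMultiplicity_pos hdh).mpr heval
  omega

/-! ### Moment conditions -/

lemma moments (D : ℕ) (hD : 2 ≤ D) (hDeven : Even D) (γ : ℝ) (hγ : 0 < γ)
    (V : Polynomial ℝ) (hVdeg : V.natDegree = D) (hVlead : V.leadingCoeff = γ)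
    (P : ℕ → Polynomial ℝ) (hP : IsSkewOrthSeq V P) (n : ℕ) :
    ∀ Q : Polynomial ℝ, Q.natDegree ≤ 2 * n →
      Jf V (dualPoly V γ D (P (2 * n)) * Q) = 0 := by
  have hd2 : 2 ≤ V.natDegree := by omega
  have hdev : Even V.natDegree := hVdeg ▸ hDeven
  have hl : 0 < V.leadingCoeff := hVlead ▸ hγ
  set Ψ := dualPoly V γ D (P (2 * n)) with hΨ
  -- skew-orthogonality against all `P k`, `k ≤ 2n`
  have hPk : ∀ k, k ≤ 2 * n → Jf V (Ψ * P k) = 0 := by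
    intro k hk
    have hsk : skew4 V (P (2 * n)) (P k) = 0 := by
      rcases Nat.even_or_odd k with ⟨m, hm⟩ | ⟨m, hm⟩
      · have := hP.2.1 n m; rwa [show 2 * m = k by omega] at this
      · have := hP.2.2.2 n m (by omega); rwa [show 2 * m + 1 = k by omega] at this
    have heq := skew4_eq_Jf V hd2 hdev hl (P (2 * n)) (P k)
    rw [hsk] at heq
    have hz : Jf V ((derivative (P (2 * n)) - derivative V * P (2 * n)) * P k) = 0 := by
      linarith
    rw [hΨ]
    unfold dualPoly
    rw [mul_assoc, Jf_smul, hz, mul_zero]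
  -- span over all polynomials of degree at most `2n`
  have key : ∀ d : ℕ, ∀ Q : Polynomial ℝ, Q.natDegree ≤ 2 * n → Q.natDegree < d →
      Jf V (Ψ * Q) = 0 := by
    intro d
    induction d with
    | zero => intro Q _ h; exact absurd h (Nat.not_lt_zero _)
    | succ d ih =>
      intro Q hQ hQd
      by_cases hQ0 : Q = 0
      · simp [hQ0, Jf]
      set k := Q.natDegree with hk
      set c := Q.coeff k with hc
      set R := Q - C c * P k with hR
      have hPkm := hP.1 k
      have hcoeffPk : (P k).coeff k = 1 := by
        have := hPkm.1.coeff_natDegree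
        rwa [hPkm.2] at this
      have hRdeg : R.natDegree ≤ k := by
        refine (natDegree_sub_le _ _).trans ?_
        have h1 : (C c * P k).natDegree ≤ k := by
          refine (natDegree_C_mul_le _ _).trans ?_
          rw [hPkm.2]
        omega
      have hRk : R.coeff k = 0 := by
        rw [hR, coeff_sub, coeff_C_mul, hcoeffPk, mul_one, hc]
        ring
      have hQeq : Q = R + C c * P k := by rw [hR]; ring
      have hsplit : Jf V (Ψ * Q) = Jf V (Ψ * R) + c * Jf V (Ψ * P k) := by
        rw [hQeq, mul_add, Jf_add V hd2 hdev hl,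
          show Ψ * (C c * P k) = C c * (Ψ * P k) by ring, Jf_smul]
      rw [hsplit, hPk k (by omega), mul_zero, add_zero]
      by_cases hR0 : R = 0
      · simp [hR0, Jf]
      · have hRlt : R.natDegree < k := by
          rcases lt_or_eq_of_le hRdeg with h | h
          · exact h
          · exfalso
            apply hR0
            rw [← leadingCoeff_eq_zero, leadingCoeff, h, hRk]
        exact ih R (by omega) (by omega)
  intro Q hQ
  exact key (Q.natDegree + 1) Q hQ (Nat.lt_succ_self _)

end DualPolyAux

open DualPolyAux

/-- `Ψ_{2n}` has at least `2n+1` distinct real zeros, of which at least `2n+2−D/2`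
are simple. -/
theorem dualPoly_even_real_zeros
    (D : ℕ) (hD : 2 ≤ D) (hDeven : Even D) (γ : ℝ) (hγ : 0 < γ)
    (V : Polynomial ℝ) (hVdeg : V.natDegree = D) (hVlead : V.leadingCoeff = γ)
    (P : ℕ → Polynomial ℝ) (hP : IsSkewOrthSeq V P) (n : ℕ) :
    ∃ s t : Finset ℝ, t ⊆ s ∧
      2 * n + 1 ≤ s.card ∧ 2 * n + 2 - D / 2 ≤ t.card ∧
      (∀ x ∈ s, (dualPoly V γ D (P (2 * n))).eval x = 0) ∧
      (∀ x ∈ t, (derivative (dualPoly V γ D (P (2 * n)))).eval x ≠ 0) := by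
  have hd2 : 2 ≤ V.natDegree := by omega
  have hdev : Even V.natDegree := hVdeg ▸ hDeven
  have hl : 0 < V.leadingCoeff := hVlead ▸ hγ
  set A := P (2 * n) with hA
  obtain ⟨hWdeg, hWne⟩ := W_facts V D hD γ hγ hVdeg hVlead A (hP.1 (2 * n)).1
    (2 * n) (hP.1 (2 * n)).2
  set Ψ := dualPoly V γ D A with hΨ
  have hcne : (-(1 / (γ * (D:ℝ)))) ≠ 0 := by
    have : (0:ℝ) < (D:ℕ) := by exact_mod_cast (by omega : 0 < D)
    have hpos : 0 < γ * (D:ℝ) := by positivity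
    simp only [neg_ne_zero]
    positivity
  have hΨne : Ψ ≠ 0 := by
    rw [hΨ]
    unfold dualPoly
    exact mul_ne_zero (fun h => hcne (C_eq_zero.mp h)) hWne
  have hΨdeg : Ψ.natDegree = 2 * n + D - 1 := by
    rw [hΨ]
    unfold dualPoly
    rw [natDegree_C_mul hcne, hWdeg]
  classical
  set s : Finset ℝ := Ψ.roots.toFinset.filter (fun r => Odd (Ψ.rootMultiplicity r)) with hs
  set t : Finset ℝ := s.filter (fun r => Ψ.rootMultiplicity r = 1) with ht
  have hts : t ⊆ s := Finset.filter_subset _ _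
  have hmem_s : ∀ r ∈ s, Ψ.IsRoot r ∧ Odd (Ψ.rootMultiplicity r) := by
    intro r hr
    rw [hs, Finset.mem_filter, Multiset.mem_toFinset, mem_roots hΨne] at hr
    exact hr
  -- the number of sign changes is at least 2n+1
  have hscard : 2 * n + 1 ≤ s.card := by
    by_contra hlt
    push_neg at hlt
    set Q : Polynomial ℝ := ∏ r ∈ s, (X - C r) with hQ
    have hQmonic : Q.Monic := prod_linear_monic s
    have hQdeg : Q.natDegree ≤ 2 * n := by
      rw [hQ]
      calc (∏ r ∈ s, (X - C r : Polynomial ℝ)).natDegree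
          ≤ ∑ r ∈ s, (X - C r : Polynomial ℝ).natDegree := natDegree_prod_le _ _
        _ = s.card := by simp [natDegree_X_sub_C]
        _ ≤ 2 * n := by omega
    have hJ : Jf V (Ψ * Q) = 0 :=
      moments D hD hDeven γ hγ V hVdeg hVlead P hP n Q hQdeg
    have hne : Ψ * Q ≠ 0 := mul_ne_zero hΨne hQmonic.ne_zero
    have heven : ∀ a : ℝ, (Ψ * Q).IsRoot a → Even ((Ψ * Q).rootMultiplicity a) := by
      intro a ha
      rw [rootMultiplicity_mul hne, rootMultiplicity_prod_linear]
      by_cases has : a ∈ s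
      · obtain ⟨-, hodd⟩ := hmem_s a has
        simp only [has, if_true]
        rcases hodd with ⟨j, hj⟩
        exact ⟨j + 1, by omega⟩
      · simp only [has, if_false, add_zero]
        have haroot : Ψ.IsRoot a := by
          rw [IsRoot, eval_mul] at ha
          rcases mul_eq_zero.mp ha with h | h
          · exact h
          · exfalso
            apply has
            rw [hQ] at h
            simp only [eval_prod, Finset.prod_eq_zero_iff] at h
            obtain ⟨r, hrs, hr⟩ := h
            simp only [eval_sub, eval_X, eval_C, sub_eq_zero] at hr
            rwa [hr]
        by_contra hodd
        apply has
        rw [hs, Finset.mem_filter, Multiset.mem_toFinset, mem_roots hΨne]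
        exact ⟨haroot, Nat.not_even_iff_odd.mp hodd⟩
    rcases sign_of_even_mult ((Ψ * Q).natDegree) (Ψ * Q) le_rfl hne heven with hc | hc
    · have := Jf_pos V hd2 hdev hl (Ψ * Q) hne hc
      rw [hJ] at this
      exact lt_irrefl 0 this
    · have hneg : Jf V (-(Ψ * Q)) = - Jf V (Ψ * Q) := by
        rw [show -(Ψ * Q) = C (-1 : ℝ) * (Ψ * Q) by
          rw [map_neg, map_one, neg_one_mul], Jf_smul]
        ring
      have := Jf_pos V hd2 hdev hl (-(Ψ * Q)) (neg_ne_zero.mpr hne)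
        (fun x => by rw [eval_neg]; linarith [hc x])
      rw [hneg, hJ, neg_zero] at this
      exact lt_irrefl 0 this
  -- counting multiplicities
  have hsum : ∑ r ∈ s, Ψ.rootMultiplicity r ≤ 2 * n + D - 1 := by
    rw [← hΨdeg]
    calc ∑ r ∈ s, Ψ.rootMultiplicity r = ∑ r ∈ s, Ψ.roots.count r := by
          refine Finset.sum_congr rfl fun r _ => ?_
          rw [count_roots]
      _ ≤ ∑ r ∈ Ψ.roots.toFinset, Ψ.roots.count r := by
          refine Finset.sum_le_sum_of_subset ?_
          rw [hs]; exact Finset.filter_subset _ _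
      _ = Multiset.card Ψ.roots := Ψ.roots.toFinset_sum_count_eq
      _ ≤ Ψ.natDegree := Ψ.card_roots'
  have hsplit : ∑ r ∈ s, Ψ.rootMultiplicity r
      = ∑ r ∈ s \ t, Ψ.rootMultiplicity r + ∑ r ∈ t, Ψ.rootMultiplicity r :=
    (Finset.sum_sdiff hts).symm
  have hlow : 3 * (s.card - t.card) ≤ ∑ r ∈ s \ t, Ψ.rootMultiplicity r := by
    have : ∀ r ∈ s \ t, 3 ≤ Ψ.rootMultiplicity r := by
      intro r hr
      rw [Finset.mem_sdiff] at hr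
      obtain ⟨hrs, hrt⟩ := hr
      obtain ⟨-, hodd⟩ := hmem_s r hrs
      have hne1 : Ψ.rootMultiplicity r ≠ 1 := by
        intro h1
        exact hrt (by rw [ht, Finset.mem_filter]; exact ⟨hrs, h1⟩)
      rcases hodd with ⟨j, hj⟩
      omega
    calc 3 * (s.card - t.card) = ∑ _r ∈ s \ t, 3 := by
          rw [Finset.sum_const, Finset.card_sdiff_of_subset hts, smul_eq_mul, mul_comm]
      _ ≤ ∑ r ∈ s \ t, Ψ.rootMultiplicity r := Finset.sum_le_sum this
  have htmult : ∑ r ∈ t, Ψ.rootMultiplicity r = t.card := by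
    rw [Finset.sum_congr rfl (fun r hr => (Finset.mem_filter.mp hr).2)]
    simp
    rfl
  have htcard : 2 * n + 2 - D / 2 ≤ t.card := by
    obtain ⟨e, he⟩ := hDeven
    have h1 : t.card ≤ s.card := Finset.card_le_card hts
    omega
  refine ⟨s, t, hts, hscard, htcard, ?_, ?_⟩
  · intro x hx
    exact (hmem_s x hx).1
  · intro x hx
    have hx1 : Ψ.rootMultiplicity x = 1 := (Finset.mem_filter.mp hx).2
    exact simple_root_deriv Ψ hΨne x hx1
end

section
/- Let H_n(z) = ((−1)^n/2^n) e^{z²} (d^n/dz^n) e^{−z²} be the monic Hermite polynomials, and define P_{2n} = n! Σ_{k=0}^{n} (1/k!) H_{2k} and P_{2n+1} = H_{2n+1}. Then {P_n} is a skew-orthogonal sequence for the potential V(x) = x²/2: each P_n is monic of degree n, ⟨P_{2n},P_{2m}⟩₄ = ⟨P_{2n+1},P_{2m+1}⟩₄ = 0 for all n,m, and ⟨P_{2n},P_{2m+1}⟩₄ = 0 for n ≠ m, where ⟨P,Q⟩₄ = (1/2)∫_ℝ (P(x)Q′(x) − P′(x)Q(x)) e^{−x²} dx. Moreover the dual polynomials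 Ψ_n(x) := −e^{x²/2}(d/dx)(P_n(x)e^{−x²/2}) satisfy Ψ_{2n} = H_{2n+1} and Ψ_{2n+1} = H_{2n+2} − (n + 1/2)·H_{2n}. -/
open Polynomial MeasureTheory


lemma integrable_pow_gauss (n : ℕ) :
    Integrable (fun x : ℝ => x ^ n * Real.exp (-x ^ 2)) := by
  apply Integrable.mono' ((integrable_exp_neg_mul_sq (by norm_num : (0:ℝ) < 1/2)).const_mul
      (Real.exp ((n:ℝ)^2/2)))
  · exact ((continuous_pow n).mul (Real.continuous_exp.comp (continuous_pow 2).neg)).aestronglyMeasurable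
  · refine Filter.Eventually.of_forall fun x => ?_
    rw [norm_mul, norm_pow, Real.norm_eq_abs, Real.norm_eq_abs,
      abs_of_pos (Real.exp_pos _)]
    have h1 : |x| ^ n ≤ Real.exp ((n:ℝ) * |x|) := by
      calc |x| ^ n ≤ Real.exp |x| ^ n := by
            apply pow_le_pow_left₀ (abs_nonneg x)
            linarith [Real.add_one_le_exp |x|]
        _ = Real.exp ((n:ℝ) * |x|) := (Real.exp_nat_mul |x| n).symm
    calc |x| ^ n * Real.exp (-x ^ 2) ≤ Real.exp ((n:ℝ) * |x|) * Real.exp (-x ^ 2) :=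
          mul_le_mul_of_nonneg_right h1 (Real.exp_pos _).le
      _ = Real.exp ((n:ℝ) * |x| + -x ^ 2) := (Real.exp_add _ _).symm
      _ ≤ Real.exp ((n:ℝ)^2/2 + -(1/2) * x ^ 2) := by
          apply Real.exp_le_exp.2
          nlinarith [sq_nonneg (|x| - (n:ℝ)), sq_abs x]
      _ = Real.exp ((n:ℝ)^2/2) * Real.exp (-(1/2) * x ^ 2) := Real.exp_add _ _

lemma integrable_poly_gauss (R : Polynomial ℝ) :
    Integrable (fun x : ℝ => R.eval x * Real.exp (-x ^ 2)) := by
  have h : (fun x : ℝ => R.eval x * Real.exp (-x ^ 2)) =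
      fun x => ∑ i ∈ Finset.range (R.natDegree + 1),
        R.coeff i * (x ^ i * Real.exp (-x ^ 2)) := by
    funext x
    rw [Polynomial.eval_eq_sum_range, Finset.sum_mul]
    exact Finset.sum_congr rfl fun i _ => by ring
  rw [h]
  exact integrable_finset_sum _ fun i _ => (integrable_pow_gauss i).const_mul _

noncomputable def LG : Polynomial ℝ →ₗ[ℝ] ℝ where
  toFun R := ∫ x : ℝ, R.eval x * Real.exp (-x ^ 2)
  map_add' p q := by
    simp only [Polynomial.eval_add, add_mul]
    exact integral_add (integrable_poly_gauss p) (integrable_poly_gauss q)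
  map_smul' c p := by
    simp only [Polynomial.eval_smul, smul_eq_mul, mul_assoc, RingHom.id_apply]
    exact integral_const_mul c _

lemma LG_apply (R : Polynomial ℝ) : LG R = ∫ x : ℝ, R.eval x * Real.exp (-x ^ 2) := rfl

lemma LG_C_mul (c : ℝ) (p : Polynomial ℝ) : LG (C c * p) = c * LG p := by
  rw [← smul_eq_C_mul, LG.map_smul, smul_eq_mul]

lemma hasDerivAt_poly_gauss (R : Polynomial ℝ) (x : ℝ) :
    HasDerivAt (fun x : ℝ => R.eval x * Real.exp (-x ^ 2))
      ((derivative R - C 2 * (X * R)).eval x * Real.exp (-x ^ 2)) x := by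
  have h1 : HasDerivAt (fun x : ℝ => -x ^ 2) (-(2 * x)) x := by
    simpa using (hasDerivAt_pow 2 x).fun_neg
  have := (R.hasDerivAt x).fun_mul h1.exp
  refine this.congr_deriv ?_
  simp only [Polynomial.eval_sub, Polynomial.eval_mul, Polynomial.eval_C, Polynomial.eval_X]
  ring

lemma LG_deriv_zero (R : Polynomial ℝ) : LG (derivative R - C 2 * (X * R)) = 0 := by
  rw [LG_apply]
  exact integral_eq_zero_of_hasDerivAt_of_integrable
    (f := fun x : ℝ => R.eval x * Real.exp (-x ^ 2))
    (fun x => hasDerivAt_poly_gauss R x) (integrable_poly_gauss _) (integrable_poly_gauss R)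

lemma herm_rec (H : ℕ → Polynomial ℝ)
    (hH : ∀ (m : ℕ) (x : ℝ), (H m).eval x =
      ((-1) ^ m / 2 ^ m) * Real.exp (x ^ 2) *
        iteratedDeriv m (fun t : ℝ => Real.exp (-t ^ 2)) x)
    (m : ℕ) : H (m + 1) = X * H m - C (1/2 : ℝ) * derivative (H m) := by
  have e2 : ∀ m : ℕ, ((-1 : ℝ) ^ m) * ((-1 : ℝ) ^ m) = 1 := by
    intro m; rw [← mul_pow]; norm_num
  have h2 : ((-2 : ℝ)) ^ m = (-1) ^ m * 2 ^ m := by rw [neg_pow]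
  have ht : (2 : ℝ) ^ m ≠ 0 := by positivity
  have e1 : ∀ y : ℝ, Real.exp (y ^ 2) * Real.exp (-y ^ 2) = 1 := by
    intro y; rw [← Real.exp_add]; simp
  have hfun : iteratedDeriv m (fun t : ℝ => Real.exp (-t ^ 2)) =
      fun y => (-2 : ℝ) ^ m * ((H m).eval y * Real.exp (-y ^ 2)) := by
    funext y
    symm
    rw [hH m y, h2]
    calc ((-1:ℝ)) ^ m * 2 ^ m * ((-1) ^ m / 2 ^ m * Real.exp (y ^ 2) *
          iteratedDeriv m (fun t : ℝ => Real.exp (-t ^ 2)) y * Real.exp (-y ^ 2))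
        = (((-1:ℝ)) ^ m * (-1) ^ m) * (2 ^ m * (2 ^ m)⁻¹) *
            (Real.exp (y ^ 2) * Real.exp (-y ^ 2)) *
            iteratedDeriv m (fun t : ℝ => Real.exp (-t ^ 2)) y := by ring
      _ = iteratedDeriv m (fun t : ℝ => Real.exp (-t ^ 2)) y := by
            rw [e2, e1, mul_inv_cancel₀ ht]; ring
  apply Polynomial.funext; intro x
  have hd := hasDerivAt_poly_gauss (H m) x
  have hD : deriv (iteratedDeriv m (fun t : ℝ => Real.exp (-t ^ 2))) x
      = (-2 : ℝ) ^ m * ((derivative (H m) - C 2 * (X * H m)).eval x * Real.exp (-x ^ 2)) := by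
    rw [hfun]; exact (hd.const_mul _).deriv
  rw [hH (m + 1) x, iteratedDeriv_succ, hD, h2]
  simp only [eval_sub, eval_mul, eval_C, eval_X, pow_succ]
  calc ((-1:ℝ)) ^ m * -1 / (2 ^ m * 2) * Real.exp (x ^ 2) *
        ((-1) ^ m * 2 ^ m *
          (((derivative (H m)).eval x - 2 * (x * (H m).eval x)) * Real.exp (-x ^ 2)))
      = (((-1:ℝ)) ^ m * (-1) ^ m) * (2 ^ m * (2 ^ m)⁻¹) *
          (Real.exp (x ^ 2) * Real.exp (-x ^ 2)) *
          (-(1/2) * ((derivative (H m)).eval x - 2 * (x * (H m).eval x))) := by ring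
    _ = x * (H m).eval x - 1/2 * (derivative (H m)).eval x := by
          rw [e2, e1, mul_inv_cancel₀ ht]; ring

section
variable (H : ℕ → Polynomial ℝ)
  (h0 : H 0 = 1)
  (hrec : ∀ m, H (m + 1) = X * H m - C (1/2 : ℝ) * derivative (H m))

include h0 hrec in
lemma herm_one : H 1 = X := by
  rw [hrec 0, h0]; simp

include h0 hrec in
lemma herm_deriv : ∀ m, derivative (H (m + 1)) = C ((m : ℝ) + 1) * H m := by
  suffices main : ∀ m, derivative (H (m + 1)) = C ((m : ℝ) + 1) * H m ∧
      derivative (H (m + 1 + 1)) = C ((m : ℝ) + 1 + 1) * H (m + 1) by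
    exact fun m => (main m).1
  intro m
  induction m with
  | zero =>
    constructor
    · rw [herm_one H h0 hrec, h0]; simp
    · rw [show (0:ℕ) + 1 + 1 = 1 + 1 from rfl, hrec 1, herm_one H h0 hrec]
      simp only [derivative_sub, derivative_mul, derivative_X, derivative_C, derivative_one,
        herm_one H h0 hrec]
      push_cast
      simp only [C_add, C_1, C_0, map_ofNat]
      ring
  | succ k ih =>
    obtain ⟨q1, q2⟩ := ih
    refine ⟨by rw [q2]; push_cast; ring, ?_⟩
    have e1 : H (k + 1 + 1) = X * H (k + 1) - C (1/2 : ℝ) * (C ((k:ℝ) + 1) * H k) := by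
      rw [hrec (k + 1), q1]
    rw [show (k:ℕ) + 1 + 1 + 1 = (k + 1 + 1) + 1 from rfl, hrec (k + 1 + 1), derivative_sub,
      derivative_mul, derivative_X, derivative_mul, derivative_C, q2, derivative_mul,
      derivative_C, q1]
    push_cast
    simp only [C_add, C_1, map_ofNat] at e1 ⊢
    linear_combination (-(C ((k:ℝ)) + 2)) * e1
end

section
variable (H : ℕ → Polynomial ℝ)
  (h0 : H 0 = 1)
  (hrec : ∀ m, H (m + 1) = X * H m - C (1/2 : ℝ) * derivative (H m))

include h0 hrec in
lemma herm_monic : ∀ m, (H m).Monic ∧ (H m).natDegree = m := by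
  intro m
  induction m with
  | zero => rw [h0]; exact ⟨monic_one, natDegree_one⟩
  | succ k ih =>
    obtain ⟨hm, hd⟩ := ih
    have hne : H k ≠ 0 := hm.ne_zero
    have hdegk : (H k).degree = (k : ℕ) := by rw [degree_eq_natDegree hne, hd]
    have hXm : (X * H k).Monic := monic_X.mul hm
    have hdX : (X * H k).degree = ((k + 1 : ℕ) : WithBot ℕ) := by
      rw [degree_mul, degree_X, hdegk]
      norm_cast
      omega
    have hq : (-(C (1/2 : ℝ) * derivative (H k))).degree < (X * H k).degree := by
      rw [degree_neg, hdX]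
      calc (C (1/2 : ℝ) * derivative (H k)).degree ≤ (derivative (H k)).degree := by
            apply le_trans (degree_mul_le _ _)
            rw [degree_C (by norm_num : (1/2 : ℝ) ≠ 0), zero_add]
        _ < ((k : ℕ) : WithBot ℕ) := hdegk ▸ degree_derivative_lt hne
        _ ≤ ((k + 1 : ℕ) : WithBot ℕ) := by exact_mod_cast Nat.le_succ k
    have hsum : H (k + 1) = X * H k + -(C (1/2 : ℝ) * derivative (H k)) := by
      rw [hrec k]; ring
    constructor
    · rw [hsum]; exact hXm.add_of_left hq
    · rw [hsum]
      exact natDegree_eq_of_degree_eq_some (by rw [degree_add_eq_left_of_degree_lt hq, hdX])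

include hrec in
lemma herm_key (a : ℕ) (q : Polynomial ℝ) :
    2 * LG (H (a + 1) * q) = LG (H a * derivative q) := by
  have hc : (C (2 : ℝ)) * C (1/2 : ℝ) = 1 := by rw [← C_mul]; norm_num
  have h1 : C (2 : ℝ) * (H (a + 1) * q) =
      H a * derivative q - (derivative (H a * q) - C 2 * (X * (H a * q))) := by
    rw [hrec a, derivative_mul]
    linear_combination (-(derivative (H a) * q)) * hc
  calc 2 * LG (H (a + 1) * q) = LG (C 2 * (H (a + 1) * q)) := (LG_C_mul 2 _).symm
    _ = LG (H a * derivative q) - LG (derivative (H a * q) - C 2 * (X * (H a * q))) := by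
        rw [h1, map_sub]
    _ = LG (H a * derivative q) := by rw [LG_deriv_zero]; ring

include h0 hrec in
lemma herm_ortho : ∀ k a, LG (H (a + k + 1) * H k) = 0 := by
  intro k
  induction k with
  | zero =>
    intro a
    have hk := herm_key H hrec a (H 0)
    rw [h0, derivative_one, mul_zero, map_zero] at hk
    show LG (H (a + 1) * H 0) = 0
    rw [h0]
    linarith
  | succ k ih =>
    intro a
    have hk := herm_key H hrec (a + k + 1) (H (k + 1))
    rw [herm_deriv H h0 hrec k,
      show H (a + k + 1) * (C ((k : ℝ) + 1) * H k) = C ((k : ℝ) + 1) * (H (a + k + 1) * H k)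
        from by ring, LG_C_mul, ih a] at hk
    show LG (H (a + k + 1 + 1) * H (k + 1)) = 0
    linarith

include h0 hrec in
lemma herm_ortho' (j k : ℕ) (hjk : j ≠ k) : LG (H j * H k) = 0 := by
  rcases Nat.lt_or_ge j k with h | h
  · obtain ⟨a, rfl⟩ : ∃ a, k = a + j + 1 := ⟨k - j - 1, by omega⟩
    rw [mul_comm]; exact herm_ortho H h0 hrec j a
  · obtain ⟨a, rfl⟩ : ∃ a, j = a + k + 1 := ⟨j - k - 1, by omega⟩
    exact herm_ortho H h0 hrec k a
end

section
variable (H : ℕ → Polynomial ℝ)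
  (h0 : H 0 = 1)
  (hrec : ∀ m, H (m + 1) = X * H m - C (1/2 : ℝ) * derivative (H m))
  (hd : ∀ m, derivative (H (m + 1)) = C ((m : ℝ) + 1) * H m)
  (h1 : H 1 = X)

include h0 hrec hd h1 in
lemma herm_tele : ∀ n, ∑ k ∈ Finset.range (n + 1),
    C (1/(k.factorial : ℝ)) * (X * H (2*k) - derivative (H (2*k))) =
    C (1/(n.factorial : ℝ)) * H (2*n+1) := by
  intro n
  induction n with
  | zero =>
    rw [Finset.sum_range_one]
    norm_num
    rw [h0, h1]
    simp
  | succ n ih =>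
    rw [Finset.sum_range_succ, ih]
    have hidx : 2*(n+1) = 2*n+2 := by ring
    rw [hidx]
    have e : H (2*n+2) = X * H (2*n+1) - C (1/2 : ℝ) * derivative (H (2*n+1)) := hrec (2*n+1)
    have d : derivative (H (2*n+1)) = C (2*(n:ℝ) + 1) * H (2*n) := by
      have := hd (2*n)
      push_cast at this
      convert this using 3 <;> ring
    have d2 : derivative (H (2*n+2)) = C (2*(n:ℝ) + 2) * H (2*n+1) := by
      have := hd (2*n+1)
      push_cast at this
      convert this using 3 <;> ring
    have e2 : H (2*n+3) = X * H (2*n+2) - C (1/2 : ℝ) * derivative (H (2*n+2)) := hrec (2*n+2)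
    have hfac : ((n+1).factorial : ℝ) = ((n:ℝ)+1) * (n.factorial : ℝ) := by
      rw [Nat.factorial_succ]; push_cast; ring
    have hfne : (n.factorial : ℝ) ≠ 0 := Nat.cast_ne_zero.2 n.factorial_ne_zero
    have hfne1 : ((n+1).factorial : ℝ) ≠ 0 := Nat.cast_ne_zero.2 (n+1).factorial_ne_zero
    have hcc : C (1/((n+1).factorial : ℝ)) * C (2*(n:ℝ)+2) * C (1/2 : ℝ) =
        C (1/(n.factorial : ℝ)) := by
      rw [← C_mul, ← C_mul]
      congr 1
      rw [hfac]
      field_simp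
    -- goal: C (1/n!) * H (2n+1) + C (1/(n+1)!) * (X * H (2n+2) - D (H (2n+2))) = C (1/(n+1)!) * H (2n+1+1+1)?
    show C (1/(n.factorial : ℝ)) * H (2*n+1) +
        C (1/((n+1).factorial : ℝ)) * (X * H (2*n+2) - derivative (H (2*n+2))) =
        C (1/((n+1).factorial : ℝ)) * H (2*n+3)
    have hc : C (1/2 : ℝ) * 2 = 1 := by
      rw [show (2 : Polynomial ℝ) = C 2 from (map_ofNat C 2).symm, ← C_mul]; norm_num
    rw [d2, e2, d2]
    linear_combination (-(H (2*n+1))) * hcc +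
      (C (1/((n+1).factorial : ℝ)) * C (2*(n:ℝ)+2) * H (2*n+1)) * hc
end



/-- The Gaussian potential `V(x) = x²/2`, for which `e^{−2V(x)} = e^{−x²}`. -/
noncomputable def gaussV : Polynomial ℝ := Polynomial.C (1 / 2) * Polynomial.X ^ 2

lemma skew4_eq (p q : Polynomial ℝ) :
    skew4 gaussV p q = LG ((X * p - derivative p) * q) := by
  have hfun : (fun x : ℝ =>
      (p.eval x * (derivative q).eval x - (derivative p).eval x * q.eval x) *
        Real.exp (-2 * gaussV.eval x)) =
      fun x : ℝ => (p * derivative q - derivative p * q).eval x * Real.exp (-x ^ 2) := by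
    funext x
    simp only [eval_sub, eval_mul, gaussV, eval_C, eval_pow, eval_X]
    rw [show -2 * (1/2 * x^2) = -x^2 from by ring]
  have h1 : skew4 gaussV p q = (1/2) * LG (p * derivative q - derivative p * q) := by
    rw [skew4, LG_apply, hfun]
  have h2 : p * derivative q - derivative p * q =
      (derivative (p * q) - C 2 * (X * (p * q))) + C 2 * ((X * p - derivative p) * q) := by
    rw [derivative_mul]
    simp only [map_ofNat]
    ring
  rw [h1, h2, map_add, LG_deriv_zero, LG_C_mul]
  ring

/-- The sequence `P_{2n} = n! Σ_{k=0}^n (1/k!) H_{2k}`, `P_{2n+1} = H_{2n+1}` built from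
the monic Hermite polynomials `H_m(z) = ((−1)^m/2^m) e^{z²} (d^m/dz^m) e^{−z²}` is a
skew-orthogonal sequence for `V(x) = x²/2`, with duals
`Ψ_{2n} = H_{2n+1}` and `Ψ_{2n+1} = H_{2n+2} − (n+1/2) H_{2n}`. -/
theorem hermite_skew_orthogonal
    (H : ℕ → Polynomial ℝ)
    (hH : ∀ (m : ℕ) (x : ℝ), (H m).eval x =
      ((-1) ^ m / 2 ^ m) * Real.exp (x ^ 2) *
        iteratedDeriv m (fun t : ℝ => Real.exp (-t ^ 2)) x)
    (P : ℕ → Polynomial ℝ)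
    (hPeven : ∀ n, P (2 * n) =
      Polynomial.C (n.factorial : ℝ) *
        ∑ k ∈ Finset.range (n + 1), Polynomial.C (1 / (k.factorial : ℝ)) * H (2 * k))
    (hPodd : ∀ n, P (2 * n + 1) = H (2 * n + 1)) :
    (∀ m, (P m).Monic ∧ (P m).natDegree = m) ∧
    (∀ n m, skew4 gaussV (P (2 * n)) (P (2 * m)) = 0) ∧
    (∀ n m, skew4 gaussV (P (2 * n + 1)) (P (2 * m + 1)) = 0) ∧
    (∀ n m, n ≠ m → skew4 gaussV (P (2 * n)) (P (2 * m + 1)) = 0) ∧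
    (∀ n, Polynomial.X * P (2 * n) - derivative (P (2 * n)) = H (2 * n + 1)) ∧
    (∀ n, Polynomial.X * P (2 * n + 1) - derivative (P (2 * n + 1)) =
      H (2 * n + 2) - Polynomial.C ((n : ℝ) + 1 / 2) * H (2 * n)) := by
  have h0 : H 0 = 1 := by
    apply Polynomial.funext
    intro x
    rw [hH 0 x]
    simp [iteratedDeriv_zero, ← Real.exp_add]
  have hrec := herm_rec H hH
  have h1 : H 1 = X := herm_one H h0 hrec
  have hd := herm_deriv H h0 hrec
  have hmon := herm_monic H h0 hrec
  have tele := herm_tele H h0 hrec hd h1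
  have hc : C (1/2 : ℝ) * 2 = 1 := by
    rw [show (2 : Polynomial ℝ) = C 2 from (map_ofNat C 2).symm, ← C_mul]; norm_num
  -- dual computations
  have dual_even : ∀ n, X * P (2 * n) - derivative (P (2 * n)) = H (2 * n + 1) := by
    intro n
    have hfne : ((n.factorial : ℝ)) ≠ 0 := Nat.cast_ne_zero.2 n.factorial_ne_zero
    set S := ∑ k ∈ Finset.range (n + 1), C (1 / (k.factorial : ℝ)) * H (2 * k) with hS
    have hS2 : X * S - derivative S = C (1 / (n.factorial : ℝ)) * H (2 * n + 1) := by
      rw [hS, derivative_sum, Finset.mul_sum, ← Finset.sum_sub_distrib, ← tele n]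
      refine Finset.sum_congr rfl fun k _ => ?_
      rw [derivative_C_mul]; ring
    rw [hPeven n]
    calc X * (C ((n.factorial : ℝ)) * S) - derivative (C ((n.factorial : ℝ)) * S)
        = C ((n.factorial : ℝ)) * (X * S - derivative S) := by rw [derivative_C_mul]; ring
      _ = C ((n.factorial : ℝ)) * (C (1 / (n.factorial : ℝ)) * H (2 * n + 1)) := by rw [hS2]
      _ = H (2 * n + 1) := by
          rw [← mul_assoc, ← C_mul, mul_one_div, div_self hfne, C_1, one_mul]
  have dual_odd : ∀ n, X * P (2 * n + 1) - derivative (P (2 * n + 1)) =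
      H (2 * n + 2) - C ((n : ℝ) + 1 / 2) * H (2 * n) := by
    intro n
    rw [hPodd n]
    have e : H (2 * n + 2) = X * H (2 * n + 1) - C (1/2 : ℝ) * derivative (H (2 * n + 1)) :=
      hrec (2 * n + 1)
    have d : derivative (H (2 * n + 1)) = C (2 * (n : ℝ) + 1) * H (2 * n) := by
      have := hd (2 * n)
      push_cast at this
      convert this using 3 <;> ring
    have hcc : C (1/2 : ℝ) * C (2 * (n : ℝ) + 1) = C ((n : ℝ) + 1/2) := by
      rw [← C_mul]; congr 1; ring
    rw [e, d]
    linear_combination (-(H (2 * n))) * hcc + (C (2 * (n : ℝ) + 1) * H (2 * n)) * hc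
  -- monicity
  have hmonP : ∀ m, (P m).Monic ∧ (P m).natDegree = m := by
    intro m
    rcases Nat.even_or_odd m with ⟨n, rfl⟩ | ⟨n, rfl⟩
    · rw [show n + n = 2 * n from (two_mul n).symm]
      have hfne : ((n.factorial : ℝ)) ≠ 0 := Nat.cast_ne_zero.2 n.factorial_ne_zero
      have hsplit : P (2 * n) = H (2 * n) +
          C ((n.factorial : ℝ)) * ∑ k ∈ Finset.range n, C (1 / (k.factorial : ℝ)) * H (2 * k) := by
        rw [hPeven n, Finset.sum_range_succ, mul_add, ← mul_assoc, ← C_mul, mul_one_div,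
          div_self hfne, C_1, one_mul]
        ring
      have hdH : (H (2 * n)).degree = ((2 * n : ℕ) : WithBot ℕ) := by
        rw [degree_eq_natDegree (hmon (2 * n)).1.ne_zero, (hmon (2 * n)).2]
      have hlt : (C ((n.factorial : ℝ)) *
          ∑ k ∈ Finset.range n, C (1 / (k.factorial : ℝ)) * H (2 * k)).degree <
          (H (2 * n)).degree := by
        rw [hdH]
        calc (C ((n.factorial : ℝ)) *
            ∑ k ∈ Finset.range n, C (1 / (k.factorial : ℝ)) * H (2 * k)).degree
            ≤ degree (C ((n.factorial : ℝ))) +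
              degree (∑ k ∈ Finset.range n, C (1 / (k.factorial : ℝ)) * H (2 * k)) :=
              degree_mul_le _ _
          _ ≤ 0 + degree (∑ k ∈ Finset.range n, C (1 / (k.factorial : ℝ)) * H (2 * k)) :=
              add_le_add_left degree_C_le _
          _ = degree (∑ k ∈ Finset.range n, C (1 / (k.factorial : ℝ)) * H (2 * k)) := zero_add _
          _ < ((2 * n : ℕ) : WithBot ℕ) := by
              apply lt_of_le_of_lt (degree_sum_le _ _)
              rw [Finset.sup_lt_iff (WithBot.bot_lt_coe _)]
              intro k hk
              calc degree (C (1 / (k.factorial : ℝ)) * H (2 * k))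
                  ≤ degree (C (1 / (k.factorial : ℝ))) + degree (H (2 * k)) := degree_mul_le _ _
                _ ≤ 0 + degree (H (2 * k)) := add_le_add_left degree_C_le _
                _ = ((2 * k : ℕ) : WithBot ℕ) := by
                    rw [zero_add, degree_eq_natDegree (hmon (2 * k)).1.ne_zero, (hmon (2 * k)).2]
                _ < ((2 * n : ℕ) : WithBot ℕ) := by
                    have hkn := Finset.mem_range.1 hk
                    exact_mod_cast (by omega : 2 * k < 2 * n)
      constructor
      · rw [hsplit]; exact (hmon (2 * n)).1.add_of_left hlt
      · rw [hsplit]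
        exact natDegree_eq_of_degree_eq_some
          (by rw [degree_add_eq_left_of_degree_lt hlt, hdH])
    · rw [hPodd n]; exact hmon (2 * n + 1)
  refine ⟨hmonP, ?_, ?_, ?_, dual_even, dual_odd⟩
  · intro n m
    rw [skew4_eq, dual_even n, hPeven m, Finset.mul_sum]
    have : ∀ k ∈ Finset.range (m + 1),
        H (2 * n + 1) * (C ((m.factorial : ℝ)) * (C (1 / (k.factorial : ℝ)) * H (2 * k))) =
        C ((m.factorial : ℝ)) * (C (1 / (k.factorial : ℝ)) * (H (2 * n + 1) * H (2 * k))) :=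
      fun k _ => by ring
    rw [Finset.mul_sum, Finset.sum_congr rfl this, map_sum]
    refine Finset.sum_eq_zero fun k _ => ?_
    rw [LG_C_mul, LG_C_mul, herm_ortho' H h0 hrec (2 * n + 1) (2 * k) (by omega),
      mul_zero, mul_zero]
  · intro n m
    rw [skew4_eq, dual_odd n, hPodd m,
      show (H (2 * n + 2) - C ((n : ℝ) + 1/2) * H (2 * n)) * H (2 * m + 1) =
        H (2 * n + 2) * H (2 * m + 1) - C ((n : ℝ) + 1/2) * (H (2 * n) * H (2 * m + 1))
        from by ring,
      map_sub, LG_C_mul, herm_ortho' H h0 hrec (2 * n + 2) (2 * m + 1) (by omega),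
      herm_ortho' H h0 hrec (2 * n) (2 * m + 1) (by omega)]
    ring
  · intro n m hnm
    rw [skew4_eq, dual_even n, hPodd m,
      herm_ortho' H h0 hrec (2 * n + 1) (2 * m + 1) (by omega)]
end
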